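/- arXiv:1312.5414 — 7 statements merged into one kernel-verified Lean document; each statement's English description precedes it below -/
import Mathlib

section
/- Let E be a real inner product space, k ≥ 1, and let x : [0,1] → E be k times continuously differentiable. Then for every 0 ≤ i ≤ k one has (∫₀¹ ‖x^{(i)}(t)‖² dt)^{1/2} ≤ Σ_{j=i}^{k−1} 2^{j−i} ‖x^{(j)}(0)‖ + 2^{k−i} (∫₀¹ ‖x^{(k)}(t)‖² dt)^{1/2}. -/
open Set intervalIntegral MeasureTheory

private lemma l2_step {E : Type*} [NormedAddCommGroup E] [NormedSpace ℝ E]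
    {y g : ℝ → E} (hy : ContinuousOn y (Set.Icc 0 1))
    (hg : ContinuousOn g (Set.Icc 0 1))
    (hd : ∀ t ∈ Set.Icc (0:ℝ) 1, HasDerivWithinAt y (g t) (Set.Icc 0 1) t) :
    Real.sqrt (∫ t in (0:ℝ)..1, ‖y t‖ ^ 2) ≤
      ‖y 0‖ + Real.sqrt (∫ t in (0:ℝ)..1, ‖g t‖ ^ 2) := by
  have h01 : (0:ℝ) ≤ 1 := by norm_num
  have huIcc : Set.uIcc (0:ℝ) 1 = Set.Icc 0 1 := Set.uIcc_of_le h01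
  -- clamped extension of ‖g‖
  set c : ℝ → ℝ := fun s => min (max s 0) 1 with hc
  have hcmem : ∀ s, c s ∈ Set.Icc (0:ℝ) 1 :=
    fun s => ⟨le_min (le_max_right _ _) h01, min_le_right _ _⟩
  have hccont : Continuous c := ((continuous_id.max continuous_const).min continuous_const)
  have hgc : Continuous fun s => ‖g (c s)‖ := (hg.comp_continuous hccont hcmem).norm
  set h : ℝ → ℝ := fun s => ‖g (c s)‖ with hhdef
  have hid : ∀ s ∈ Set.Icc (0:ℝ) 1, h s = ‖g s‖ := by
    intro s hs
    have : c s = s := by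
      simp only [hc, max_eq_left hs.1, min_eq_left hs.2]
    simp [hhdef, this]
  set B : ℝ → ℝ := fun u => ‖y 0‖ + ∫ s in (0:ℝ)..u, h s with hBdef
  have hB : ∀ u, HasDerivAt B (h u) u := fun u =>
    (intervalIntegral.integral_hasDerivAt_right
      (hgc.intervalIntegrable _ _)
      (hgc.stronglyMeasurableAtFilter _ _)
      hgc.continuousAt).const_add _
  have hderiv : ∀ t ∈ Set.Ico (0:ℝ) 1, HasDerivWithinAt y (g t) (Set.Ici t) t := fun t ht =>
    (hd t (Set.Ico_subset_Icc_self ht)).mono_of_mem_nhdsWithin (Icc_mem_nhdsGE_of_mem ht)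
  have ha : ‖y 0‖ ≤ B 0 := by simp [hBdef]
  have hbound : ∀ t ∈ Set.Ico (0:ℝ) 1, ‖g t‖ ≤ h t := fun t ht =>
    (hid t (Set.Ico_subset_Icc_self ht)).ge
  have hmono : ∀ t ∈ Set.Icc (0:ℝ) 1, ‖y t‖ ≤ B t := fun t ht =>
    image_norm_le_of_norm_deriv_right_le_deriv_boundary hy hderiv ha hB hbound ht
  set C : ℝ := B 1 with hCdef
  have hBleC : ∀ t ∈ Set.Icc (0:ℝ) 1, B t ≤ C := by
    intro t ht
    have hint1 : IntervalIntegrable h volume 0 t := hgc.intervalIntegrable _ _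
    have hint2 : IntervalIntegrable h volume t 1 := hgc.intervalIntegrable _ _
    have hsplit := intervalIntegral.integral_add_adjacent_intervals hint1 hint2
    have hnn : 0 ≤ ∫ s in t..1, h s :=
      intervalIntegral.integral_nonneg ht.2 (fun s _ => norm_nonneg _)
    simp only [hBdef, hCdef]
    linarith [hsplit]
  have hC0 : 0 ≤ C := (norm_nonneg (y 1)).trans ((hmono 1 ⟨h01, le_refl 1⟩).trans (hBleC 1 ⟨h01, le_refl 1⟩))
  have hyint : IntervalIntegrable (fun t => ‖y t‖ ^ 2) volume 0 1 :=
    (hy.norm.pow 2).intervalIntegrable_of_Icc h01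
  have h1 : (∫ t in (0:ℝ)..1, ‖y t‖ ^ 2) ≤ ∫ t in (0:ℝ)..1, C ^ 2 :=
    intervalIntegral.integral_mono_on h01 hyint intervalIntegrable_const
      (fun t ht => pow_le_pow_left₀ (norm_nonneg _) ((hmono t ht).trans (hBleC t ht)) 2)
  have h2 : Real.sqrt (∫ t in (0:ℝ)..1, ‖y t‖ ^ 2) ≤ C := by
    have : (∫ t in (0:ℝ)..1, C ^ 2) = C ^ 2 := by simp
    calc Real.sqrt (∫ t in (0:ℝ)..1, ‖y t‖ ^ 2)
        ≤ Real.sqrt (C ^ 2) := Real.sqrt_le_sqrt (by rw [← this]; exact h1)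
      _ = C := Real.sqrt_sq hC0
  -- now bound C
  set A : ℝ := ∫ s in (0:ℝ)..1, ‖g s‖ with hAdef
  have hCA : C = ‖y 0‖ + A := by
    simp only [hCdef, hBdef, hAdef]
    congr 1
    exact intervalIntegral.integral_congr (fun s hs => hid s (huIcc ▸ hs))
  have hgn : IntervalIntegrable (fun t => ‖g t‖) volume 0 1 :=
    hg.norm.intervalIntegrable_of_Icc h01
  have hg2 : IntervalIntegrable (fun t => ‖g t‖ ^ 2) volume 0 1 :=
    (hg.norm.pow 2).intervalIntegrable_of_Icc h01
  have hA0 : 0 ≤ A := intervalIntegral.integral_nonneg h01 (fun s _ => norm_nonneg _)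
  have key : A ^ 2 ≤ ∫ t in (0:ℝ)..1, ‖g t‖ ^ 2 := by
    have expand : (∫ t in (0:ℝ)..1, (‖g t‖ - A) ^ 2)
        = (∫ t in (0:ℝ)..1, ‖g t‖ ^ 2) - A ^ 2 := by
      have heq : ∀ t, (‖g t‖ - A) ^ 2 = ‖g t‖ ^ 2 - 2 * A * ‖g t‖ + A ^ 2 := by
        intro t; ring
      simp_rw [heq]
      rw [intervalIntegral.integral_add ((hg2.sub (hgn.const_mul _))) intervalIntegrable_const,
        intervalIntegral.integral_sub hg2 (hgn.const_mul _),
        intervalIntegral.integral_const_mul, intervalIntegral.integral_const]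
      simp only [smul_eq_mul, one_mul, ← hAdef]
      ring
    have pos : 0 ≤ ∫ t in (0:ℝ)..1, (‖g t‖ - A) ^ 2 :=
      intervalIntegral.integral_nonneg h01 (fun t _ => sq_nonneg _)
    linarith [expand ▸ pos]
  have hAs : A ≤ Real.sqrt (∫ t in (0:ℝ)..1, ‖g t‖ ^ 2) := by
    calc A = Real.sqrt (A ^ 2) := (Real.sqrt_sq hA0).symm
      _ ≤ _ := Real.sqrt_le_sqrt key
  linarith [h2, hCA, hAs]

/-- Iterated estimate: all lower-order derivatives of a `Cᵏ` curve are bounded in L²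
by the initial derivative values and the L² norm of the top-order derivative
(from the proof of Proposition 4.1). -/
theorem stmt4 {E : Type*} [NormedAddCommGroup E] [InnerProductSpace ℝ E]
    (k : ℕ) (hk : 1 ≤ k) (x : ℝ → E)
    (hx : ContDiffOn ℝ k x (Set.Icc 0 1)) :
    ∀ i ≤ k,
      Real.sqrt (∫ t in (0:ℝ)..1, ‖iteratedDerivWithin i x (Set.Icc 0 1) t‖ ^ 2) ≤
        (∑ j ∈ Finset.Ico i k,
            (2:ℝ) ^ (j - i) * ‖iteratedDerivWithin j x (Set.Icc 0 1) 0‖) +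
          (2:ℝ) ^ (k - i) *
            Real.sqrt (∫ t in (0:ℝ)..1, ‖iteratedDerivWithin k x (Set.Icc 0 1) t‖ ^ 2) := by
  have hu : UniqueDiffOn ℝ (Set.Icc (0:ℝ) 1) := uniqueDiffOn_Icc (by norm_num)
  have aux : ∀ n : ℕ, ∀ i : ℕ, i + n = k →
      Real.sqrt (∫ t in (0:ℝ)..1, ‖iteratedDerivWithin i x (Set.Icc 0 1) t‖ ^ 2) ≤
        (∑ j ∈ Finset.Ico i k,
            (2:ℝ) ^ (j - i) * ‖iteratedDerivWithin j x (Set.Icc 0 1) 0‖) +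
          (2:ℝ) ^ (k - i) *
            Real.sqrt (∫ t in (0:ℝ)..1, ‖iteratedDerivWithin k x (Set.Icc 0 1) t‖ ^ 2) := by
    intro n
    induction n with
    | zero =>
      intro i hi
      simp only [Nat.add_zero] at hi
      subst hi
      simp
    | succ n ih =>
      intro i hi
      have hik : i < k := by omega
      have hih := ih (i + 1) (by omega)
      -- one-step estimate
      have hy : ContinuousOn (iteratedDerivWithin i x (Set.Icc 0 1)) (Set.Icc 0 1) :=
        hx.continuousOn_iteratedDerivWithin (by exact_mod_cast hik.le) hu
      have hg : ContinuousOn (iteratedDerivWithin (i + 1) x (Set.Icc 0 1)) (Set.Icc 0 1) :=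
        hx.continuousOn_iteratedDerivWithin (by exact_mod_cast hik) hu
      have hdiff : DifferentiableOn ℝ (iteratedDerivWithin i x (Set.Icc 0 1)) (Set.Icc 0 1) :=
        hx.differentiableOn_iteratedDerivWithin (by exact_mod_cast hik) hu
      have hd : ∀ t ∈ Set.Icc (0:ℝ) 1,
          HasDerivWithinAt (iteratedDerivWithin i x (Set.Icc 0 1))
            (iteratedDerivWithin (i + 1) x (Set.Icc 0 1) t) (Set.Icc 0 1) t := by
        intro t ht
        have := (hdiff t ht).hasDerivWithinAt
        rwa [← iteratedDerivWithin_succ] at this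
      have hstep := l2_step hy hg hd
      refine hstep.trans ?_
      rw [Finset.sum_eq_sum_Ico_succ_bot hik]
      have hsum : (∑ j ∈ Finset.Ico (i + 1) k,
            (2:ℝ) ^ (j - (i + 1)) * ‖iteratedDerivWithin j x (Set.Icc 0 1) 0‖) ≤
          ∑ j ∈ Finset.Ico (i + 1) k,
            (2:ℝ) ^ (j - i) * ‖iteratedDerivWithin j x (Set.Icc 0 1) 0‖ := by
        apply Finset.sum_le_sum
        intro j hj
        have : (2:ℝ) ^ (j - (i + 1)) ≤ (2:ℝ) ^ (j - i) :=
          pow_le_pow_right₀ (by norm_num) (by omega)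
        exact mul_le_mul_of_nonneg_right this (norm_nonneg _)
      have hpow : (2:ℝ) ^ (k - (i + 1)) ≤ (2:ℝ) ^ (k - i) :=
        pow_le_pow_right₀ (by norm_num) (by omega)
      have hsq : 0 ≤ Real.sqrt (∫ t in (0:ℝ)..1, ‖iteratedDerivWithin k x (Set.Icc 0 1) t‖ ^ 2) :=
        Real.sqrt_nonneg _
      have := mul_le_mul_of_nonneg_right hpow hsq
      simp only [Nat.sub_self, pow_zero, one_mul]
      linarith [hih, hsum, this]
  intro i hik
  exact aux (k - i) i (by omega)
end

section
/- Let E be a finite-dimensional real inner product space, k ≥ 1, and let (xₘ) be a sequence of k times continuously differentiable curves xₘ : [0,1] → E such that sup_{m} sup_{t∈[0,1]} ‖xₘ(t)‖ ≤ R and Σ_{j=1}^{k} ∫₀¹ ‖xₘ^{(j)}(t)‖² dt ≤ K for all m, for some constants R, K. Then there exist a strictly increasing map φ : ℕ → ℕ and a (k−1) times continuously differentiable curve y : [0,1] → E such that for every 0 ≤ i ≤ k−1 the derivatives x_{φ(m)}^{(i)} converge to y^{(i)} uniformly on [0,1] as m → ∞. -/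
open Set MeasureTheory intervalIntegral Filter Topology
open scoped BoundedContinuousFunction

section AuxLemmas
variable {E : Type*} [NormedAddCommGroup E] [NormedSpace ℝ E]

private lemma ftc_aux [CompleteSpace E] {f f' : ℝ → E}
    (hc : ContinuousOn f (Icc 0 1))
    (hd : ∀ u ∈ Ioo (0:ℝ) 1, HasDerivAt f (f' u) u)
    (hc' : ContinuousOn f' (Icc 0 1))
    {s t : ℝ} (hs : s ∈ Icc (0:ℝ) 1) (ht : t ∈ Icc (0:ℝ) 1) :
    f t - f s = ∫ u in s..t, f' u := by
  have hsub : uIcc s t ⊆ Icc (0:ℝ) 1 := uIcc_subset_Icc hs ht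
  refine (integral_eq_sub_of_hasDeriv_right (hc.mono hsub) ?_
    ((hc'.mono hsub).intervalIntegrable)).symm
  intro u hu
  exact (hd u ⟨lt_of_le_of_lt (le_min hs.1 ht.1) hu.1,
    lt_of_lt_of_le hu.2 (max_le hs.2 ht.2)⟩).hasDerivWithinAt

private lemma modulus_aux {g : ℝ → E} (hg : ContinuousOn g (Icc 0 1))
    {c : ℝ} (hc : 0 < c) {s t : ℝ} (hs : s ∈ Icc (0:ℝ) 1) (ht : t ∈ Icc (0:ℝ) 1) (hst : s ≤ t) :
    (∫ u in s..t, ‖g u‖) ≤ c / 2 * (t - s) + (1 / (2 * c)) * ∫ u in (0:ℝ)..1, ‖g u‖ ^ 2 := by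
  have hIst : Icc s t ⊆ Icc (0:ℝ) 1 := Icc_subset_Icc hs.1 ht.2
  have hgn : IntervalIntegrable (fun u => ‖g u‖) volume s t :=
    (hg.norm.mono hIst).intervalIntegrable_of_Icc hst
  have hgsq : ContinuousOn (fun u => ‖g u‖ ^ 2) (Icc 0 1) := (hg.norm).pow 2
  have hgsqI : IntervalIntegrable (fun u => ‖g u‖ ^ 2) volume s t :=
    (hgsq.mono hIst).intervalIntegrable_of_Icc hst
  have hA : IntervalIntegrable (fun u => c / 2 + ‖g u‖ ^ 2 / (2 * c)) volume s t :=
    intervalIntegrable_const.add (hgsqI.div_const _)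
  have h2c : (0:ℝ) < 2 * c := by linarith
  have step1 : (∫ u in s..t, ‖g u‖) ≤ ∫ u in s..t, (c / 2 + ‖g u‖ ^ 2 / (2 * c)) := by
    refine integral_mono_on hst hgn hA fun u _ => ?_
    have h1 : 2 * c * ‖g u‖ ≤ c ^ 2 + ‖g u‖ ^ 2 := by nlinarith [sq_nonneg (‖g u‖ - c)]
    calc ‖g u‖ = (2 * c * ‖g u‖) / (2 * c) := by field_simp
      _ ≤ (c ^ 2 + ‖g u‖ ^ 2) / (2 * c) := by gcongr
      _ = c / 2 + ‖g u‖ ^ 2 / (2 * c) := by field_simp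
  have step2 : (∫ u in s..t, (c / 2 + ‖g u‖ ^ 2 / (2 * c)))
      = c / 2 * (t - s) + (1 / (2 * c)) * ∫ u in s..t, ‖g u‖ ^ 2 := by
    rw [integral_add intervalIntegrable_const (hgsqI.div_const _),
      intervalIntegral.integral_const, intervalIntegral.integral_div, smul_eq_mul]
    ring
  have step3 : (∫ u in s..t, ‖g u‖ ^ 2) ≤ ∫ u in (0:ℝ)..1, ‖g u‖ ^ 2 :=
    integral_mono_interval hs.1 hst ht.2
      (Eventually.of_forall fun u => by positivity)
      (hgsq.intervalIntegrable_of_Icc zero_le_one)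
  calc (∫ u in s..t, ‖g u‖) ≤ _ := step1
    _ = _ := step2
    _ ≤ c / 2 * (t - s) + (1 / (2 * c)) * ∫ u in (0:ℝ)..1, ‖g u‖ ^ 2 := by
        have h0 : (0:ℝ) ≤ 1 / (2 * c) := by positivity
        nlinarith [mul_le_mul_of_nonneg_left step3 h0]

private lemma reg_aux : ∀ (n : ℕ) (g : ℕ → ℝ → E),
    (∀ i ≤ n, ContinuousOn (g i) (Icc 0 1)) →
    (∀ i < n, ∀ t ∈ Icc (0:ℝ) 1, HasDerivWithinAt (g i) (g (i+1) t) (Icc 0 1) t) →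
    ContDiffOn ℝ n (g 0) (Icc 0 1) ∧
      ∀ i ≤ n, EqOn (iteratedDerivWithin i (g 0) (Icc 0 1)) (g i) (Icc 0 1) := by
  intro n
  induction n with
  | zero =>
    intro g hc _
    refine ⟨by simpa using ((contDiffOn_zero (𝕜 := ℝ)).mpr (hc 0 le_rfl)), ?_⟩
    intro i hi
    interval_cases i
    simp [iteratedDerivWithin_zero, Set.EqOn]
  | succ n IH =>
    intro g hc hd
    have hI : UniqueDiffOn ℝ (Icc (0:ℝ) 1) := uniqueDiffOn_Icc one_pos
    have hder1 : EqOn (derivWithin (g 0) (Icc 0 1)) (g 1) (Icc 0 1) := fun t ht =>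
      (hd 0 (Nat.succ_pos n) t ht).derivWithin (hI t ht)
    obtain ⟨IH1, IH2⟩ := IH (fun i => g (i+1)) (fun i hi => hc (i+1) (by omega))
      (fun i hi t ht => hd (i+1) (by omega) t ht)
    constructor
    · rw [show ((n+1 : ℕ) : WithTop ℕ∞) = (n : WithTop ℕ∞) + 1 by norm_cast]
      rw [contDiffOn_succ_iff_derivWithin hI]
      refine ⟨fun t ht => (hd 0 (Nat.succ_pos n) t ht).differentiableWithinAt, ?_, ?_⟩
      · intro h; simp at h
      · exact IH1.congr fun t ht => hder1 ht
    · intro i hi t ht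
      match i with
      | 0 => simp
      | (j+1) =>
        rw [iteratedDerivWithin_succ',
          iteratedDerivWithin_congr hder1 ht]
        exact IH2 j (by omega) ht

private lemma aa_aux {β : Type*} [NormedAddCommGroup β] [ProperSpace β]
    (F : ℕ → ℝ → β) (M : ℝ)
    (hc : ∀ m, ContinuousOn (F m) (Icc 0 1))
    (hb : ∀ m, ∀ t ∈ Icc (0:ℝ) 1, ‖F m t‖ ≤ M)
    (he : ∀ ε > 0, ∃ δ > 0, ∀ m, ∀ s ∈ Icc (0:ℝ) 1, ∀ t ∈ Icc (0:ℝ) 1,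
      |s - t| < δ → ‖F m s - F m t‖ < ε) :
    ∃ φ : ℕ → ℕ, StrictMono φ ∧ ∃ L : ℝ → β, Continuous L ∧
      TendstoUniformlyOn (fun m => F (φ m)) L atTop (Icc 0 1) := by
  let G : ℕ → (Icc (0:ℝ) 1) →ᵇ β := fun m =>
    BoundedContinuousFunction.mkOfCompact ⟨_, (hc m).restrict⟩
  have hue : UniformEquicontinuous (fun (a : Set.range G) => ⇑(a : (Icc (0:ℝ) 1) →ᵇ β)) := by
    rw [Metric.uniformEquicontinuous_iff]
    intro ε hε
    obtain ⟨δ, hδ, hδ'⟩ := he ε hε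
    refine ⟨δ, hδ, fun u v huv a => ?_⟩
    obtain ⟨m, hm⟩ := a.2
    rw [← hm]
    have hdd : dist (G m u) (G m v) = ‖F m ↑u - F m ↑v‖ := dist_eq_norm _ _
    rw [hdd]
    refine hδ' m ↑u u.2 ↑v v.2 ?_
    rw [Subtype.dist_eq, Real.dist_eq] at huv
    exact huv
  have hcomp := BoundedContinuousFunction.arzela_ascoli (Metric.closedBall (0:β) M)
    (isCompact_closedBall _ _) (Set.range G)
    (fun f u hf => by
      obtain ⟨m, rfl⟩ := hf
      simpa [G, Metric.mem_closedBall, dist_zero_right] using hb m ↑u u.2)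
    hue.equicontinuous
  obtain ⟨L0, _, φ, hφ, hconv⟩ :=
    hcomp.tendsto_subseq (fun m => subset_closure (Set.mem_range_self m))
  have hconv' : TendstoUniformly (fun m => ⇑(G (φ m))) ⇑L0 atTop :=
    BoundedContinuousFunction.tendsto_iff_tendstoUniformly.mp hconv
  refine ⟨φ, hφ, fun t => L0 (projIcc 0 1 zero_le_one t),
    L0.continuous.comp continuous_projIcc, ?_⟩
  rw [tendstoUniformlyOn_iff_tendstoUniformly_comp_coe]
  have hh : ((fun t => L0 (projIcc 0 1 zero_le_one t)) ∘ (Subtype.val : (Icc (0:ℝ) 1) → ℝ))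
      = ⇑L0 := by
    funext u
    simp only [Function.comp_apply, Set.projIcc_of_mem zero_le_one u.2]
  rw [hh]
  exact hconv'

end AuxLemmas

/-- Corollary 3.5 for curves in Euclidean space: a sequence of `Cᵏ` curves, bounded
in `C⁰` and with uniformly bounded `H^{k-1}` velocity, has a subsequence converging
in `C^{k-1}` on `[0,1]`. -/
theorem stmt5 {E : Type*} [NormedAddCommGroup E] [InnerProductSpace ℝ E]
    [FiniteDimensional ℝ E]
    (k : ℕ) (hk : 1 ≤ k) (R K : ℝ) (x : ℕ → ℝ → E)
    (hx : ∀ m, ContDiffOn ℝ k (x m) (Set.Icc 0 1))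
    (hR : ∀ m, ∀ t ∈ Set.Icc (0:ℝ) 1, ‖x m t‖ ≤ R)
    (hK : ∀ m, (∑ j ∈ Finset.Icc 1 k,
        ∫ t in (0:ℝ)..1, ‖iteratedDerivWithin j (x m) (Set.Icc 0 1) t‖ ^ 2) ≤ K) :
    ∃ φ : ℕ → ℕ, StrictMono φ ∧ ∃ y : ℝ → E,
      ContDiffOn ℝ (k - 1 : ℕ) y (Set.Icc 0 1) ∧
      ∀ i ≤ k - 1, TendstoUniformlyOn
        (fun m => iteratedDerivWithin i (x (φ m)) (Set.Icc 0 1))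
        (iteratedDerivWithin i y (Set.Icc 0 1)) Filter.atTop (Set.Icc 0 1) := by
  classical
  have hI : UniqueDiffOn ℝ (Icc (0:ℝ) 1) := uniqueDiffOn_Icc one_pos
  have h0I : (0:ℝ) ∈ Icc (0:ℝ) 1 := left_mem_Icc.mpr zero_le_one
  -- basic facts about K
  have hK0 : 0 ≤ K := by
    refine le_trans ?_ (hK 0)
    exact Finset.sum_nonneg fun j _ =>
      intervalIntegral.integral_nonneg zero_le_one (fun u _ => by positivity)
  have hL2 : ∀ m j, 1 ≤ j → j ≤ k →
      (∫ t in (0:ℝ)..1, ‖iteratedDerivWithin j (x m) (Icc 0 1) t‖ ^ 2) ≤ K := by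
    intro m j h1 h2
    refine le_trans ?_ (hK m)
    exact Finset.single_le_sum
      (f := fun j => ∫ t in (0:ℝ)..1, ‖iteratedDerivWithin j (x m) (Icc 0 1) t‖ ^ 2)
      (fun i _ => intervalIntegral.integral_nonneg zero_le_one (fun u _ => by positivity))
      (Finset.mem_Icc.mpr ⟨h1, h2⟩)
  -- continuity and differentiability of the iterated derivatives
  have hDcont : ∀ m, ∀ i ≤ k, ContinuousOn (iteratedDerivWithin i (x m) (Icc 0 1)) (Icc 0 1) :=
    fun m i hik => (hx m).continuousOn_iteratedDerivWithin (by exact_mod_cast hik) hI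
  have hDderiv : ∀ m, ∀ i < k, ∀ t ∈ Icc (0:ℝ) 1,
      HasDerivWithinAt (iteratedDerivWithin i (x m) (Icc 0 1))
        (iteratedDerivWithin (i+1) (x m) (Icc 0 1) t) (Icc 0 1) t := by
    intro m i hik t ht
    have hdiff := ((hx m).differentiableOn_iteratedDerivWithin
      (by exact_mod_cast hik) hI t ht).hasDerivWithinAt
    rwa [← iteratedDerivWithin_succ] at hdiff
  have hFTC : ∀ m, ∀ i < k, ∀ s ∈ Icc (0:ℝ) 1, ∀ t ∈ Icc (0:ℝ) 1,
      iteratedDerivWithin i (x m) (Icc 0 1) t - iteratedDerivWithin i (x m) (Icc 0 1) s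
        = ∫ u in s..t, iteratedDerivWithin (i+1) (x m) (Icc 0 1) u := by
    intro m i hik s hs t ht
    refine ftc_aux (hDcont m i hik.le) ?_ (hDcont m (i+1) hik) hs ht
    intro u hu
    exact (hDderiv m i hik u (Ioo_subset_Icc_self hu)).hasDerivAt (Icc_mem_nhds hu.1 hu.2)
  -- uniform modulus of continuity
  have hMod : ∀ m, ∀ i < k, ∀ s ∈ Icc (0:ℝ) 1, ∀ t ∈ Icc (0:ℝ) 1, ∀ c : ℝ, 0 < c →
      ‖iteratedDerivWithin i (x m) (Icc 0 1) t - iteratedDerivWithin i (x m) (Icc 0 1) s‖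
        ≤ c / 2 * |t - s| + 1 / (2 * c) * K := by
    intro m i hik s hs t ht c hc
    have key : ∀ s' ∈ Icc (0:ℝ) 1, ∀ t' ∈ Icc (0:ℝ) 1, s' ≤ t' →
        ‖iteratedDerivWithin i (x m) (Icc 0 1) t' - iteratedDerivWithin i (x m) (Icc 0 1) s'‖
          ≤ c / 2 * |t' - s'| + 1 / (2 * c) * K := by
      intro s' hs' t' ht' hst
      rw [hFTC m i hik s' hs' t' ht']
      have h1 : t' - s' = |t' - s'| := (abs_of_nonneg (by linarith)).symm
      have h2 := hL2 m (i+1) (Nat.le_add_left 1 i) hik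
      have h3 : (0:ℝ) ≤ 1 / (2 * c) := by positivity
      calc ‖∫ u in s'..t', iteratedDerivWithin (i+1) (x m) (Icc 0 1) u‖
          ≤ ∫ u in s'..t', ‖iteratedDerivWithin (i+1) (x m) (Icc 0 1) u‖ :=
            norm_integral_le_integral_norm hst
        _ ≤ c / 2 * (t' - s') + (1 / (2 * c)) *
            ∫ u in (0:ℝ)..1, ‖iteratedDerivWithin (i+1) (x m) (Icc 0 1) u‖ ^ 2 :=
            modulus_aux (hDcont m (i+1) hik) hc hs' ht' hst
        _ ≤ c / 2 * |t' - s'| + 1 / (2 * c) * K := by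
            rw [← h1]
            exact add_le_add le_rfl (mul_le_mul_of_nonneg_left h2 h3)
    rcases le_total s t with hst | hst
    · exact key s hs t ht hst
    · rw [norm_sub_rev, abs_sub_comm]
      exact key t ht s hs hst
  -- uniform bound on all the derivatives of order ≤ k-1
  have hBound : ∀ m, ∀ i ≤ k - 1, ∀ t ∈ Icc (0:ℝ) 1,
      ‖iteratedDerivWithin i (x m) (Icc 0 1) t‖ ≤ max R (Real.sqrt K + (1/2 + K/2)) := by
    intro m i hi t ht
    rcases Nat.eq_zero_or_pos i with rfl | hpos
    · have h00 : iteratedDerivWithin 0 (x m) (Icc (0:ℝ) 1) t = x m t := by simp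
      rw [h00]
      exact le_trans (hR m t ht) (le_max_left _ _)
    · have hik : i < k := by omega
      obtain ⟨t₀, ht₀I, ht₀⟩ := isCompact_Icc.exists_isMinOn (nonempty_Icc.mpr zero_le_one)
        ((hDcont m i hik.le).norm)
      have hmin := isMinOn_iff.mp ht₀
      have hcont2 : ContinuousOn (fun u => ‖iteratedDerivWithin i (x m) (Icc 0 1) u‖ ^ 2)
          (Icc (0:ℝ) 1) := ((hDcont m i hik.le).norm).pow 2
      have h2 : ‖iteratedDerivWithin i (x m) (Icc 0 1) t₀‖ ^ 2
          ≤ ∫ u in (0:ℝ)..1, ‖iteratedDerivWithin i (x m) (Icc 0 1) u‖ ^ 2 := by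
        calc ‖iteratedDerivWithin i (x m) (Icc 0 1) t₀‖ ^ 2
            = ∫ _u in (0:ℝ)..1, ‖iteratedDerivWithin i (x m) (Icc 0 1) t₀‖ ^ 2 := by
              rw [intervalIntegral.integral_const]; simp
          _ ≤ _ := by
              refine integral_mono_on zero_le_one intervalIntegrable_const
                (hcont2.intervalIntegrable_of_Icc zero_le_one) (fun u hu => ?_)
              exact pow_le_pow_left₀ (norm_nonneg _) (hmin u hu) 2
      have h3 : ‖iteratedDerivWithin i (x m) (Icc 0 1) t₀‖ ≤ Real.sqrt K :=
        (Real.le_sqrt (norm_nonneg _) hK0).mpr (h2.trans (hL2 m i hpos hik.le))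
      have h4 := hMod m i hik t₀ ht₀I t ht 1 one_pos
      have habs : |t - t₀| ≤ 1 := by
        rw [abs_sub_le_iff]
        constructor <;> linarith [ht.1, ht.2, ht₀I.1, ht₀I.2]
      calc ‖iteratedDerivWithin i (x m) (Icc 0 1) t‖
          ≤ ‖iteratedDerivWithin i (x m) (Icc 0 1) t₀‖
            + ‖iteratedDerivWithin i (x m) (Icc 0 1) t
              - iteratedDerivWithin i (x m) (Icc 0 1) t₀‖ := by
            have hns := norm_sub_norm_le (iteratedDerivWithin i (x m) (Icc 0 1) t)
              (iteratedDerivWithin i (x m) (Icc 0 1) t₀)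
            linarith
        _ ≤ Real.sqrt K + (1 / 2 * |t - t₀| + 1 / (2 * 1) * K) := add_le_add h3 h4
        _ ≤ Real.sqrt K + (1/2 + K/2) := by nlinarith [abs_nonneg (t - t₀)]
        _ ≤ max R (Real.sqrt K + (1/2 + K/2)) := le_max_right _ _
  set M : ℝ := max R (Real.sqrt K + (1/2 + K/2)) with hMdef
  have hM0 : 0 ≤ M := le_trans (norm_nonneg _) (hBound 0 0 (Nat.zero_le _) 0 h0I)
  -- apply Arzelà–Ascoli to the `(Fin k → E)`-valued curve of all derivatives of order < k
  set F : ℕ → ℝ → (Fin k → E) :=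
    fun m t i => iteratedDerivWithin i.1 (x m) (Icc 0 1) t with hFdef
  have hFc : ∀ m, ContinuousOn (F m) (Icc 0 1) := by
    intro m
    rw [continuousOn_pi]
    exact fun i => hDcont m i.1 i.2.le
  have hFb : ∀ m, ∀ t ∈ Icc (0:ℝ) 1, ‖F m t‖ ≤ M := by
    intro m t ht
    refine (pi_norm_le_iff_of_nonneg hM0).mpr fun i => ?_
    exact hBound m i.1 (Nat.le_pred_of_lt i.2) t ht
  have hFe : ∀ ε > 0, ∃ δ > 0, ∀ m, ∀ s ∈ Icc (0:ℝ) 1, ∀ t ∈ Icc (0:ℝ) 1,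
      |s - t| < δ → ‖F m s - F m t‖ < ε := by
    intro ε hε
    set c : ℝ := (K + 1) / ε with hcdef
    have hc : 0 < c := by positivity
    refine ⟨ε / (2 * c), by positivity, fun m s hs t ht hst => ?_⟩
    have hcoord : ∀ i : Fin k, ‖(F m s - F m t) i‖ ≤ 3 * ε / 4 := by
      intro i
      have h5 : (F m s - F m t) i = iteratedDerivWithin i.1 (x m) (Icc 0 1) s
          - iteratedDerivWithin i.1 (x m) (Icc 0 1) t := rfl
      rw [h5]
      have h6 := hMod m i.1 i.2 t ht s hs c hc
      have h7 : c / 2 * |s - t| ≤ c / 2 * (ε / (2 * c)) :=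
        mul_le_mul_of_nonneg_left hst.le (by positivity)
      have h8 : c / 2 * (ε / (2 * c)) = ε / 4 := by field_simp; ring
      have h9 : 1 / (2 * c) * K ≤ ε / 2 := by
        have hcc : 1 / (2 * c) * K = K * ε / (2 * (K + 1)) := by
          rw [hcdef]; field_simp
        rw [hcc, div_le_div_iff₀ (by positivity) (by norm_num : (0:ℝ) < 2)]
        nlinarith
      calc ‖iteratedDerivWithin i.1 (x m) (Icc 0 1) s
          - iteratedDerivWithin i.1 (x m) (Icc 0 1) t‖
          ≤ c / 2 * |s - t| + 1 / (2 * c) * K := h6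
        _ ≤ ε / 4 + ε / 2 := by rw [← h8]; exact add_le_add h7 h9
        _ ≤ 3 * ε / 4 := by linarith
    calc ‖F m s - F m t‖ ≤ 3 * ε / 4 := by
          rw [pi_norm_le_iff_of_nonneg (by positivity)]
          exact hcoord
      _ < ε := by linarith
  obtain ⟨φ, hφ, G, hGc, hGu⟩ := aa_aux F M hFc hFb hFe
  -- the limit functions at each level
  set Y : ℕ → ℝ → E := fun i t => if h : i < k then G t ⟨i, h⟩ else 0 with hYdef
  have hYeq : ∀ (i : ℕ) (h : i < k) (t : ℝ), Y i t = G t ⟨i, h⟩ := by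
    intro i h t; simp [hYdef, h]
  have hYcont : ∀ i, Continuous (Y i) := by
    intro i
    by_cases h : i < k
    · have : Y i = fun t => G t ⟨i, h⟩ := funext fun t => hYeq i h t
      rw [this]
      exact (continuous_apply (⟨i, h⟩ : Fin k)).comp hGc
    · have : Y i = fun _ => 0 := funext fun t => by simp [hYdef, h]
      rw [this]; exact continuous_const
  have hYU : ∀ (i : ℕ), i < k → TendstoUniformlyOn
      (fun m => iteratedDerivWithin i (x (φ m)) (Icc 0 1)) (Y i) atTop (Icc (0:ℝ) 1) := by
    intro i h
    rw [Metric.tendstoUniformlyOn_iff]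
    intro ε hε
    filter_upwards [Metric.tendstoUniformlyOn_iff.mp hGu ε hε] with m hm t ht
    have h1 := hm t ht
    have h2 : dist (Y i t) (iteratedDerivWithin i (x (φ m)) (Icc 0 1) t)
        = dist (G t ⟨i, h⟩) (F (φ m) t ⟨i, h⟩) := by rw [hYeq i h t]
    rw [h2]
    exact lt_of_le_of_lt (dist_le_pi_dist _ _ _) h1
  -- integral representation of the limit levels
  have hYint : ∀ i, i + 1 < k → ∀ t ∈ Icc (0:ℝ) 1,
      Y i t = Y i 0 + ∫ u in (0:ℝ)..t, Y (i+1) u := by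
    intro i hik t ht
    have lim1 : Tendsto (fun m => iteratedDerivWithin i (x (φ m)) (Icc 0 1) t) atTop
        (𝓝 (Y i t)) := (hYU i (by omega)).tendsto_at ht
    have lim2 : Tendsto (fun m => iteratedDerivWithin i (x (φ m)) (Icc 0 1) 0) atTop
        (𝓝 (Y i 0)) := (hYU i (by omega)).tendsto_at h0I
    have lim3 : Tendsto (fun m => ∫ u in (0:ℝ)..t, iteratedDerivWithin (i+1) (x (φ m))
        (Icc 0 1) u) atTop (𝓝 (∫ u in (0:ℝ)..t, Y (i+1) u)) := by
      rw [Metric.tendsto_atTop]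
      intro ε hε
      have hev := Metric.tendstoUniformlyOn_iff.mp (hYU (i+1) hik) (ε/2) (half_pos hε)
      rw [eventually_atTop] at hev
      obtain ⟨N, hN⟩ := hev
      refine ⟨N, fun m hm => ?_⟩
      have hsub' : ∀ u ∈ uIoc (0:ℝ) t,
          ‖iteratedDerivWithin (i+1) (x (φ m)) (Icc 0 1) u - Y (i+1) u‖ ≤ ε/2 := by
        intro u hu
        rw [uIoc_of_le ht.1] at hu
        have huI : u ∈ Icc (0:ℝ) 1 := ⟨hu.1.le, hu.2.trans ht.2⟩
        have := hN m hm u huI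
        rw [dist_comm, dist_eq_norm] at this
        exact this.le
      have hint1 : IntervalIntegrable
          (iteratedDerivWithin (i+1) (x (φ m)) (Icc 0 1)) volume 0 t :=
        ((hDcont (φ m) (i+1) (by omega)).mono (Icc_subset_Icc le_rfl ht.2)
          ).intervalIntegrable_of_Icc ht.1
      have hint2 : IntervalIntegrable (Y (i+1)) volume 0 t :=
        (hYcont (i+1)).intervalIntegrable _ _
      rw [dist_eq_norm, ← intervalIntegral.integral_sub hint1 hint2]
      calc ‖∫ u in (0:ℝ)..t, (iteratedDerivWithin (i+1) (x (φ m)) (Icc 0 1) u - Y (i+1) u)‖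
          ≤ ε/2 * |t - 0| := intervalIntegral.norm_integral_le_of_norm_le_const hsub'
        _ ≤ ε/2 * 1 := by
            rw [sub_zero]
            gcongr
            rw [abs_of_nonneg ht.1]
            exact ht.2
        _ < ε := by linarith
    have heq : ∀ m, iteratedDerivWithin i (x (φ m)) (Icc 0 1) t
        = iteratedDerivWithin i (x (φ m)) (Icc 0 1) 0
          + ∫ u in (0:ℝ)..t, iteratedDerivWithin (i+1) (x (φ m)) (Icc 0 1) u := by
      intro m
      exact sub_eq_iff_eq_add'.mp (hFTC (φ m) i (by omega) 0 h0I t ht)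
    have lim4 := lim2.add lim3
    rw [show (fun m => iteratedDerivWithin i (x (φ m)) (Icc 0 1) 0
        + ∫ u in (0:ℝ)..t, iteratedDerivWithin (i+1) (x (φ m)) (Icc 0 1) u)
        = fun m => iteratedDerivWithin i (x (φ m)) (Icc 0 1) t
        from funext fun m => (heq m).symm] at lim4
    exact tendsto_nhds_unique lim1 lim4
  have hYder : ∀ i, i + 1 < k → ∀ t ∈ Icc (0:ℝ) 1,
      HasDerivWithinAt (Y i) (Y (i+1) t) (Icc 0 1) t := by
    intro i hik t ht
    have hF : HasDerivAt (fun u => Y i 0 + ∫ v in (0:ℝ)..u, Y (i+1) v) (Y (i+1) t) t :=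
      (((hYcont (i+1)).integral_hasStrictDerivAt 0 t).hasDerivAt).const_add (Y i 0)
    exact (hF.hasDerivWithinAt).congr (fun u hu => hYint i hik u hu) (hYint i hik t ht)
  obtain ⟨hCD, hEqD⟩ := reg_aux (k-1) Y
    (fun i hi => (hYcont i).continuousOn)
    (fun i hi t ht => hYder i (by omega) t ht)
  refine ⟨φ, hφ, Y 0, hCD, ?_⟩
  intro i hi
  have hik : i < k := by omega
  exact (hYU i hik).congr_right (fun t ht => (hEqD i hi ht).symm)
end

section
/- Let E be a finite-dimensional real inner product space, k ≥ 1, and let A : [0,1] × E → E be continuous with ‖A(t,p)‖ ≤ C for all (t,p) and some constant C. Fix v₀, …, v_{k−1} ∈ E and α ≥ 0. Let (xₘ) be a sequence of k times continuously differentiable curves xₘ : [0,1] → E with xₘ^{(i)}(0) = vᵢ for 0 ≤ i ≤ k−1 and ∫₀¹ ‖xₘ^{(k)}(t) − A(t, xₘ(t))‖² dt ≤ α² for all m. Then there exist a strictly increasing map φ : ℕ → ℕ and a (k−1) times continuously differentiable curve y : [0,1] → E such that for every 0 ≤ i ≤ k−1 the derivatives x_{φ(m)}^{(i)} converge to y^{(i)}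 uniformly on [0,1]. -/
open Set Filter MeasureTheory intervalIntegral BoundedContinuousFunction

section AuxStmt6

variable {E : Type*} [NormedAddCommGroup E] [NormedSpace ℝ E] [CompleteSpace E]

/-- Iterated primitives of `W` with prescribed constants `c`. -/
noncomputable def auxG6 (W : ℝ → E) (c : ℕ → E) : ℕ → ℝ → E
  | 0 => W
  | (j+1) => fun t => c (j+1) + ∫ s in (0:ℝ)..t, auxG6 W c j s

lemma auxG6_cont {W : ℝ → E} {c : ℕ → E} (hW : Continuous W) :
    ∀ j, Continuous (auxG6 W c j)
  | 0 => hW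
  | (j+1) => by
    have h := auxG6_cont (c := c) hW j
    simp only [auxG6]
    exact continuous_const.add
      (intervalIntegral.continuous_primitive (fun a b => h.intervalIntegrable a b) 0)

lemma auxG6_hasDerivAt {W : ℝ → E} {c : ℕ → E} (hW : Continuous W) (j : ℕ) (t : ℝ) :
    HasDerivAt (auxG6 W c (j+1)) (auxG6 W c j t) t := by
  have h := auxG6_cont (c := c) hW j
  simp only [auxG6]
  exact HasDerivAt.const_add _ ((h.integral_hasStrictDerivAt 0 t).hasDerivAt)

lemma auxG6_contDiff {W : ℝ → E} {c : ℕ → E} (hW : Continuous W) :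
    ∀ j : ℕ, ContDiff ℝ (j : ℕ) (auxG6 W c j)
  | 0 => by exact_mod_cast contDiff_zero.mpr hW
  | (j+1) => by
    have ih := auxG6_contDiff (c := c) hW j
    have hd : deriv (auxG6 W c (j+1)) = auxG6 W c j :=
      funext fun t => (auxG6_hasDerivAt hW j t).deriv
    have h2 : ContDiff ℝ ((j : ℕ) + 1 : WithTop ℕ∞) (auxG6 W c (j+1)) := by
      rw [contDiff_succ_iff_deriv]
      refine ⟨fun t => (auxG6_hasDerivAt hW j t).differentiableAt, by simp, ?_⟩
      rw [hd]; exact ih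
    exact_mod_cast h2

lemma auxG6_iteratedDerivWithin {W : ℝ → E} {c : ℕ → E} (hW : Continuous W) (j : ℕ) :
    ∀ i ≤ j, Set.EqOn (iteratedDerivWithin i (auxG6 W c j) (Set.Icc 0 1))
      (auxG6 W c (j - i)) (Set.Icc (0:ℝ) 1) := by
  have hUD : UniqueDiffOn ℝ (Set.Icc (0:ℝ) 1) := uniqueDiffOn_Icc one_pos
  intro i
  induction i with
  | zero => intro _ t ht; simp
  | succ i ih =>
    intro hij t ht
    have h1 : i ≤ j := by omega
    rw [iteratedDerivWithin_succ, derivWithin_congr (ih h1) (ih h1 ht)]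
    have hji : j - i = (j - (i+1)) + 1 := by omega
    rw [hji]
    exact ((auxG6_hasDerivAt hW _ t).hasDerivWithinAt).derivWithin (hUD t ht)

end AuxStmt6

set_option maxHeartbeats 1000000 in
/-- Proposition 4.1 for curves in Euclidean space: the higher-order conditional
extremal functional `J_k` with bounded prior `A` is weakly proper with respect to
`C^{k-1}`: a bound on `J_k` on curves with fixed initial derivative data forces
relative compactness in the `C^{k-1}` topology. -/
theorem stmt6 {E : Type*} [NormedAddCommGroup E] [InnerProductSpace ℝ E]
    [FiniteDimensional ℝ E]
    (k : ℕ) (hk : 1 ≤ k) (A : ℝ × E → E)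
    (hA : ContinuousOn A (Set.Icc (0:ℝ) 1 ×ˢ (Set.univ : Set E)))
    (C : ℝ) (hC : ∀ t ∈ Set.Icc (0:ℝ) 1, ∀ p : E, ‖A (t, p)‖ ≤ C)
    (v : Fin k → E) (α : ℝ) (hα : 0 ≤ α) (x : ℕ → ℝ → E)
    (hx : ∀ m, ContDiffOn ℝ k (x m) (Set.Icc 0 1))
    (hbc : ∀ m, ∀ i : Fin k, iteratedDerivWithin i (x m) (Set.Icc 0 1) 0 = v i)
    (hJ : ∀ m, (∫ t in (0:ℝ)..1,
        ‖iteratedDerivWithin k (x m) (Set.Icc 0 1) t - A (t, x m t)‖ ^ 2) ≤ α ^ 2) :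
    ∃ φ : ℕ → ℕ, StrictMono φ ∧ ∃ y : ℝ → E,
      ContDiffOn ℝ (k - 1 : ℕ) y (Set.Icc 0 1) ∧
      ∀ i ≤ k - 1, TendstoUniformlyOn
        (fun m => iteratedDerivWithin i (x (φ m)) (Set.Icc 0 1))
        (iteratedDerivWithin i y (Set.Icc 0 1)) Filter.atTop (Set.Icc 0 1) := by
  have hUD : UniqueDiffOn ℝ (Set.Icc (0:ℝ) 1) := uniqueDiffOn_Icc one_pos
  have h01 : (0:ℝ) ∈ Set.Icc (0:ℝ) 1 := by norm_num
  have hC0 : 0 ≤ C := le_trans (norm_nonneg (A (0,0))) (hC 0 h01 0)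
  set D : ℕ → ℕ → ℝ → E := fun m i => iteratedDerivWithin i (x m) (Set.Icc 0 1) with hD
  -- continuity of the iterated derivatives
  have hcont : ∀ m, ∀ i ≤ k, ContinuousOn (D m i) (Set.Icc 0 1) := by
    intro m i hi
    exact (hx m).continuousOn_iteratedDerivWithin (by exact_mod_cast hi) hUD
  have hAc : ∀ m, ContinuousOn (fun t => A (t, x m t)) (Set.Icc (0:ℝ) 1) := by
    intro m
    exact hA.comp (continuousOn_id.prodMk (hx m).continuousOn) fun t ht => ⟨ht, Set.mem_univ _⟩
  have hgc : ∀ m, ContinuousOn (fun t => ‖D m k t - A (t, x m t)‖ ^ 2) (Set.Icc (0:ℝ) 1) := by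
    intro m
    exact (((hcont m k le_rfl).sub (hAc m)).norm).pow 2
  -- FTC for iterated derivatives
  have hFTC : ∀ m i, i < k → ∀ s ∈ Set.Icc (0:ℝ) 1, ∀ t ∈ Set.Icc (0:ℝ) 1, s ≤ t →
      (∫ u in s..t, D m (i+1) u) = D m i t - D m i s := by
    intro m i hik s hs t ht hst
    refine intervalIntegral.integral_eq_sub_of_hasDeriv_right_of_le hst
      ((hcont m i hik.le).mono (Set.Icc_subset_Icc hs.1 ht.2)) (fun u hu => ?_)
      (((hcont m (i+1) hik).mono ?_).intervalIntegrable)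
    · have huI : u ∈ Set.Icc (0:ℝ) 1 := ⟨hs.1.trans hu.1.le, hu.2.le.trans ht.2⟩
      have hu' : u ∈ Set.Ioo (0:ℝ) 1 := ⟨lt_of_le_of_lt hs.1 hu.1, lt_of_lt_of_le hu.2 ht.2⟩
      have hdiff : DifferentiableWithinAt ℝ (D m i) (Set.Icc 0 1) u :=
        ((hx m).differentiableOn_iteratedDerivWithin (by exact_mod_cast hik) hUD) u huI
      have hdW : HasDerivWithinAt (D m i) (D m (i+1) u) (Set.Icc 0 1) u := by
        have h1 : D m (i+1) u = derivWithin (D m i) (Set.Icc 0 1) u :=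
          congrFun iteratedDerivWithin_succ u
        rw [h1]
        exact hdiff.hasDerivWithinAt
      exact ((hdW.hasDerivAt (Icc_mem_nhds hu'.1 hu'.2)).hasDerivWithinAt)
    · rw [Set.uIcc_of_le hst]
      exact Set.Icc_subset_Icc hs.1 ht.2
  -- bound on subinterval integrals of the squared residual
  have hJsub : ∀ m, ∀ s ∈ Set.Icc (0:ℝ) 1, ∀ t ∈ Set.Icc (0:ℝ) 1, s ≤ t →
      (∫ u in s..t, ‖D m k u - A (u, x m u)‖ ^ 2) ≤ α ^ 2 := by
    intro m s hs t ht hst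
    refine le_trans (intervalIntegral.integral_mono_interval hs.1 hst ht.2 ?_ ?_) (hJ m)
    · exact Filter.Eventually.of_forall fun u => by positivity
    · exact ((hgc m).mono (by rw [Set.uIcc_of_le zero_le_one])).intervalIntegrable
  -- modulus of continuity for the (k-1)-st derivative
  have hmod : ∀ m, ∀ ε : ℝ, 0 < ε → ∀ s ∈ Set.Icc (0:ℝ) 1, ∀ t ∈ Set.Icc (0:ℝ) 1, s ≤ t →
      ‖D m (k-1) t - D m (k-1) s‖ ≤ (C + ε/2) * (t-s) + α^2 / (2*ε) := by
    intro m ε hε s hs t ht hst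
    have hk1 : k - 1 + 1 = k := Nat.succ_pred_eq_of_pos hk
    have hFT := hFTC m (k-1) (by omega) s hs t ht hst
    rw [hk1] at hFT
    rw [← hFT]
    have hsubI : Set.Icc s t ⊆ Set.Icc (0:ℝ) 1 := Set.Icc_subset_Icc hs.1 ht.2
    have hsubI' : Set.uIcc s t ⊆ Set.Icc (0:ℝ) 1 := by
      rw [Set.uIcc_of_le hst]; exact hsubI
    have hint1 : IntervalIntegrable (fun u => ‖D m k u‖) volume s t :=
      (((hcont m k le_rfl).mono hsubI').norm).intervalIntegrable
    have hint2 : IntervalIntegrable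
        (fun u => C + ε/2 + ‖D m k u - A (u, x m u)‖^2 / (2*ε)) volume s t :=
      (continuousOn_const.add (((hgc m).mono hsubI').div_const _)).intervalIntegrable
    calc ‖∫ u in s..t, D m k u‖
        ≤ ∫ u in s..t, ‖D m k u‖ := intervalIntegral.norm_integral_le_integral_norm hst
      _ ≤ ∫ u in s..t, (C + ε/2 + ‖D m k u - A (u, x m u)‖^2 / (2*ε)) := by
          refine intervalIntegral.integral_mono_on hst hint1 hint2 fun u hu => ?_
          have huI := hsubI hu
          have hAb := hC u huI (x m u)
          have htri : ‖D m k u‖ ≤ ‖D m k u - A (u, x m u)‖ + ‖A (u, x m u)‖ := by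
            simpa using norm_add_le (D m k u - A (u, x m u)) (A (u, x m u))
          have hq : ‖D m k u - A (u, x m u)‖ ≤ ε/2 + ‖D m k u - A (u, x m u)‖^2 / (2*ε) := by
            have h2 : (0:ℝ) < 2*ε := by linarith
            have h3 : ε/2 + ‖D m k u - A (u, x m u)‖^2 / (2*ε) - ‖D m k u - A (u, x m u)‖
                = (‖D m k u - A (u, x m u)‖ - ε)^2 / (2*ε) := by
              field_simp
              ring
            have h4 : (0:ℝ) ≤ (‖D m k u - A (u, x m u)‖ - ε)^2 / (2*ε) :=
              div_nonneg (sq_nonneg _) h2.le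
            linarith
          linarith
      _ = (C + ε/2) * (t-s) + (∫ u in s..t, ‖D m k u - A (u, x m u)‖^2) / (2*ε) := by
          rw [intervalIntegral.integral_add (intervalIntegrable_const)
            ((((hgc m).mono hsubI').div_const _).intervalIntegrable),
            intervalIntegral.integral_const, intervalIntegral.integral_div, smul_eq_mul]
          ring
      _ ≤ (C + ε/2) * (t-s) + α^2 / (2*ε) :=
          add_le_add_right ((div_le_div_iff_of_pos_right (by positivity)).mpr
            (hJsub m s hs t ht hst)) _
  -- the boundary value of the (k-1)-st derivative
  have hbc' : ∀ m, D m (k-1) 0 = v ⟨k-1, by omega⟩ := fun m => hbc m ⟨k-1, by omega⟩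
  set R : ℝ := ‖v ⟨k-1, by omega⟩‖ + (C + 1/2 + α^2/2) with hR
  have hRB : ∀ m, ∀ t ∈ Set.Icc (0:ℝ) 1, ‖D m (k-1) t‖ ≤ R := by
    intro m t ht
    have h1 := hmod m 1 one_pos 0 h01 t ht ht.1
    rw [hbc' m] at h1
    have h2 : ‖D m (k-1) t‖ ≤ ‖D m (k-1) t - v ⟨k-1, by omega⟩‖ + ‖v ⟨k-1, by omega⟩‖ := by
      simpa [sub_add_cancel] using norm_add_le (D m (k-1) t - v ⟨k-1, by omega⟩) (v ⟨k-1, by omega⟩)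
    have ht1 : t ≤ 1 := ht.2
    have ht0 : 0 ≤ t := ht.1
    rw [hR]
    nlinarith [norm_nonneg (v (⟨k-1, by omega⟩ : Fin k))]
  -- the family of (k-1)-st derivatives as bounded continuous functions on [0,1]
  let K : Type _ := (Set.Icc (0:ℝ) 1)
  let Fb : ℕ → (K →ᵇ E) := fun m => BoundedContinuousFunction.mkOfCompact
    ⟨fun u => D m (k-1) u.1, continuousOn_iff_continuous_restrict.mp (hcont m (k-1) (by omega))⟩
  have hFbval : ∀ m (u : K), Fb m u = D m (k-1) u.1 := fun m u => rfl
  have hRnn : 0 ≤ R := le_trans (norm_nonneg _) (hRB 0 0 h01)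
  -- equicontinuity
  have hequi : Equicontinuous ((↑) : Set.range Fb → K → E) := by
    intro u₀
    rw [Metric.equicontinuousAt_iff]
    intro ε hε
    set εp : ℝ := (α^2 + 1)/ε with hεp
    have hεp0 : 0 < εp := by positivity
    have hεεp : ε * εp = α^2 + 1 := by rw [hεp]; field_simp
    have htail : α^2/(2*εp) < ε/2 := by
      rw [div_lt_div_iff₀ (by positivity) (by norm_num)]
      nlinarith
    set δ : ℝ := (ε/2 - α^2/(2*εp)) / (C + εp/2 + 1) with hδ
    have hδ0 : 0 < δ := div_pos (by linarith) (by positivity)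
    refine ⟨δ, hδ0, fun u hu g => ?_⟩
    obtain ⟨g, m, rfl⟩ := g
    have key : ∀ a b : K, (a:ℝ) ≤ b → (b:ℝ) - a < δ →
        dist (Fb m a) (Fb m b) < ε := by
      intro a b hab habδ
      rw [hFbval, hFbval, dist_eq_norm, norm_sub_rev]
      have h1 := hmod m εp hεp0 a a.2 b b.2 hab
      have h2 : (C + εp/2) * ((b:ℝ) - a) < (C + εp/2 + 1) * δ := by
        have hb0 : (0:ℝ) ≤ (b:ℝ) - a := by linarith
        nlinarith
      have h3 : (C + εp/2 + 1) * δ = ε/2 - α^2/(2*εp) := by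
        rw [hδ]
        field_simp
      calc ‖D m (k-1) b.1 - D m (k-1) a.1‖ ≤ (C + εp/2) * ((b:ℝ) - a) + α^2/(2*εp) := h1
        _ < ε := by rw [h3] at h2; linarith
    rcases le_total (u₀:ℝ) u with h | h
    · exact key u₀ u h (by calc (u:ℝ) - u₀ ≤ |(u:ℝ) - u₀| := le_abs_self _
        _ = dist u u₀ := by rw [Subtype.dist_eq, Real.dist_eq]
        _ < δ := hu)
    · rw [dist_comm]
      refine key u u₀ h ?_
      calc (u₀:ℝ) - u ≤ |(u₀:ℝ) - u| := le_abs_self _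
        _ = dist u u₀ := by rw [Subtype.dist_eq, Real.dist_eq, abs_sub_comm]
        _ < δ := hu
  -- Arzelà–Ascoli
  have hcomp : IsCompact (closure (Set.range Fb)) :=
    BoundedContinuousFunction.arzela_ascoli (Metric.closedBall (0:E) R)
      (isCompact_closedBall 0 R) (Set.range Fb)
      (fun g u hg => by
        obtain ⟨m, rfl⟩ := hg
        rw [Metric.mem_closedBall, dist_zero_right, hFbval]
        exact hRB m u.1 u.2) hequi
  obtain ⟨w, hwmem, φ, hφ, hconv⟩ :=
    hcomp.isSeqCompact (fun m => subset_closure (Set.mem_range_self m))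
  have hTU : TendstoUniformly (fun m => (Fb (φ m) : K → E)) w atTop :=
    BoundedContinuousFunction.tendsto_iff_tendstoUniformly.mp hconv
  -- extend the limit to ℝ
  set W : ℝ → E := fun t => w (Set.projIcc 0 1 zero_le_one t) with hW
  have hWc : Continuous W := w.continuous.comp continuous_projIcc
  have hWval : ∀ t (ht : t ∈ Set.Icc (0:ℝ) 1), W t = w ⟨t, ht⟩ := by
    intro t ht
    rw [hW]
    simp only [Set.projIcc_of_mem zero_le_one ht]
  have hlow : TendstoUniformlyOn (fun m => D (φ m) (k-1)) W atTop (Set.Icc (0:ℝ) 1) := by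
    rw [Metric.tendstoUniformlyOn_iff]
    intro ε hε
    filter_upwards [Metric.tendstoUniformly_iff.mp hTU ε hε] with m hm t ht
    have h1 := hm ⟨t, ht⟩
    rw [hWval t ht]
    rw [hFbval] at h1
    exact h1
  -- the iterated primitives of the limit
  set c : ℕ → E := fun j => v ⟨k - 1 - j, by omega⟩ with hc
  set G : ℕ → ℝ → E := auxG6 W c with hG
  have hGc : ∀ j, Continuous (G j) := fun j => auxG6_cont hWc j
  -- propagate uniform convergence downwards
  have hconvG : ∀ j, j ≤ k - 1 →
      TendstoUniformlyOn (fun m => D (φ m) (k - 1 - j)) (G j) atTop (Set.Icc (0:ℝ) 1) := by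
    intro j
    induction j with
    | zero => intro _; exact hlow
    | succ j ih =>
      intro hj
      have hj' : j ≤ k - 1 := by omega
      have ihj := ih hj'
      have hik : k - 1 - (j+1) < k := by omega
      have hi1 : k - 1 - (j+1) + 1 = k - 1 - j := by omega
      rw [Metric.tendstoUniformlyOn_iff]
      intro ε hε
      filter_upwards [Metric.tendstoUniformlyOn_iff.mp ihj (ε/2) (by positivity)] with m hm t ht
      have hint1 : IntervalIntegrable (G j) volume 0 t := (hGc j).intervalIntegrable 0 t
      have hint2 : IntervalIntegrable (D (φ m) (k - 1 - j)) volume 0 t := by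
        refine ((hcont (φ m) (k - 1 - j) (by omega)).mono ?_).intervalIntegrable
        rw [Set.uIcc_of_le ht.1]
        exact Set.Icc_subset_Icc le_rfl ht.2
      have hDt : D (φ m) (k - 1 - (j+1)) t
          = v ⟨k - 1 - (j+1), hik⟩ + ∫ u in (0:ℝ)..t, D (φ m) (k - 1 - j) u := by
        have hF := hFTC (φ m) (k - 1 - (j+1)) hik 0 h01 t ht ht.1
        rw [hi1] at hF
        have h0 : D (φ m) (k - 1 - (j+1)) 0 = v ⟨k - 1 - (j+1), hik⟩ :=
          hbc (φ m) ⟨k - 1 - (j+1), hik⟩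
        rw [hF, h0]
        abel
      have hGt : G (j+1) t = v ⟨k - 1 - (j+1), hik⟩ + ∫ u in (0:ℝ)..t, G j u := rfl
      rw [hDt, hGt, dist_eq_norm]
      have hsub : (v ⟨k - 1 - (j+1), hik⟩ + ∫ u in (0:ℝ)..t, G j u)
          - (v ⟨k - 1 - (j+1), hik⟩ + ∫ u in (0:ℝ)..t, D (φ m) (k - 1 - j) u)
          = ∫ u in (0:ℝ)..t, (G j u - D (φ m) (k - 1 - j) u) := by
        rw [intervalIntegral.integral_sub hint1 hint2]
        abel
      rw [hsub]
      have hb : ∀ u ∈ Set.uIoc (0:ℝ) t, ‖G j u - D (φ m) (k - 1 - j) u‖ ≤ ε/2 := by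
        intro u hu
        rw [Set.uIoc_of_le ht.1] at hu
        have huI : u ∈ Set.Icc (0:ℝ) 1 := ⟨hu.1.le, hu.2.trans ht.2⟩
        have := hm u huI
        rw [dist_eq_norm] at this
        exact this.le
      calc ‖∫ u in (0:ℝ)..t, (G j u - D (φ m) (k - 1 - j) u)‖
          ≤ ε/2 * |t - 0| := intervalIntegral.norm_integral_le_of_norm_le_const hb
        _ ≤ ε/2 * 1 := by
            have : |t - 0| ≤ 1 := by rw [sub_zero, abs_of_nonneg ht.1]; exact ht.2
            nlinarith
        _ < ε := by linarith
  -- assemble the result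
  refine ⟨φ, hφ, auxG6 W c (k-1), (auxG6_contDiff hWc (k-1)).contDiffOn, ?_⟩
  intro i hik1
  have hj : k - 1 - (k - 1 - i) = i := by omega
  have h := hconvG (k - 1 - i) (by omega)
  rw [hj] at h
  exact h.congr_right (auxG6_iteratedDerivWithin hWc (k-1) i hik1).symm
end

section
/- Let E be a finite-dimensional real inner product space, τ ≠ 0 a real number, p ∈ E, and K ≥ 0. Let (xₘ) be a sequence of twice continuously differentiable curves xₘ : [0,1] → E with xₘ(0) = p and ½ ∫₀¹ (‖xₘ″(t)‖² + τ² ‖xₘ′(t)‖²) dt ≤ K for all m. Then there exist a strictly increasing map φ : ℕ → ℕ and a continuously differentiable curve y : [0,1] → E such that x_{φ(m)} → y and x_{φ(m)}′ → y′ uniformly on [0,1]. -/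
open Set intervalIntegral Filter BoundedContinuousFunction

section
variable {E : Type*} [NormedAddCommGroup E] [NormedSpace ℝ E] [CompleteSpace E]

lemma holder_aux {E : Type*} [NormedAddCommGroup E] [NormedSpace ℝ E] [CompleteSpace E] (f f' : ℝ → E) (C : ℝ)
    (hC : 0 < C)
    (hfc : ContinuousOn f (Icc 0 1))
    (hf' : ContinuousOn f' (Icc 0 1))
    (hd : ∀ u ∈ Set.Ioo (0:ℝ) 1, HasDerivAt f (f' u) u)
    (hb : (∫ u in (0:ℝ)..1, ‖f' u‖^2) ≤ C) :
    ∀ s ∈ Icc (0:ℝ) 1, ∀ t ∈ Icc (0:ℝ) 1, s ≤ t →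
      ‖f t - f s‖ ≤ Real.sqrt C * Real.sqrt (t - s) := by
  intro s hs t ht hst
  rcases eq_or_lt_of_le hst with rfl | hlt
  · simp [Real.sqrt_nonneg, mul_nonneg]
  have hsub : Icc s t ⊆ Icc (0:ℝ) 1 := Icc_subset_Icc hs.1 ht.2
  have hint : IntervalIntegrable f' MeasureTheory.volume s t := by
    apply ContinuousOn.intervalIntegrable
    rw [uIcc_of_le hst]; exact hf'.mono hsub
  have hint2 : IntervalIntegrable (fun u => ‖f' u‖^2) MeasureTheory.volume s t := by
    apply ContinuousOn.intervalIntegrable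
    rw [uIcc_of_le hst]; exact ((hf'.mono hsub).norm.pow 2)
  have hint2' : IntervalIntegrable (fun u => ‖f' u‖^2) MeasureTheory.volume 0 1 := by
    apply ContinuousOn.intervalIntegrable
    rw [uIcc_of_le (by norm_num : (0:ℝ) ≤ 1)]; exact hf'.norm.pow 2
  -- FTC
  have hftc : (∫ u in s..t, f' u) = f t - f s := by
    apply integral_eq_sub_of_hasDeriv_right_of_le hst (hfc.mono hsub) _ hint
    intro u hu
    exact ((hd u ⟨lt_of_le_of_lt hs.1 hu.1, lt_of_lt_of_le hu.2 ht.2⟩).hasDerivWithinAt)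
  set δ := t - s with hδ
  have hδ0 : 0 < δ := sub_pos.2 hlt
  set ε := Real.sqrt δ / Real.sqrt C with hε
  have hε0 : 0 < ε := div_pos (Real.sqrt_pos.2 hδ0) (Real.sqrt_pos.2 hC)
  have key : ∀ u, ‖f' u‖ ≤ (ε * ‖f' u‖^2 + ε⁻¹)/2 := by
    intro u
    have h1 : ε * ε⁻¹ = 1 := mul_inv_cancel₀ hε0.ne'
    nlinarith [sq_nonneg (ε*‖f' u‖ - 1), hε0.le, norm_nonneg (f' u)]
  have hbound : ‖f t - f s‖ ≤ (ε * (∫ u in s..t, ‖f' u‖^2) + ε⁻¹ * δ)/2 := by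
    rw [← hftc]
    calc ‖∫ u in s..t, f' u‖ ≤ ∫ u in s..t, ‖f' u‖ :=
          norm_integral_le_integral_norm hst
      _ ≤ ∫ u in s..t, (ε * ‖f' u‖^2 + ε⁻¹)/2 := by
          apply integral_mono_on hst hint.norm _ (fun u _ => key u)
          exact ((hint2.const_mul ε).add intervalIntegrable_const).div_const 2
      _ = (ε * (∫ u in s..t, ‖f' u‖^2) + ε⁻¹ * δ)/2 := by
          rw [integral_div, integral_add (hint2.const_mul ε) intervalIntegrable_const,
            integral_const_mul, integral_const, smul_eq_mul]
          ring
  have hmono : (∫ u in s..t, ‖f' u‖^2) ≤ C := by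
    refine le_trans (integral_mono_interval hs.1 hst ht.2 ?_ hint2') hb
    filter_upwards with u using sq_nonneg _
  have hfin : (ε * C + ε⁻¹ * δ)/2 = Real.sqrt C * Real.sqrt δ := by
    have h1 : Real.sqrt C * Real.sqrt C = C := Real.mul_self_sqrt hC.le
    have h2 : Real.sqrt δ * Real.sqrt δ = δ := Real.mul_self_sqrt hδ0.le
    have h3 : Real.sqrt C ≠ 0 := (Real.sqrt_pos.2 hC).ne'
    have h4 : Real.sqrt δ ≠ 0 := (Real.sqrt_pos.2 hδ0).ne'
    rw [hε]
    field_simp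
    ring_nf
    nlinarith [h1, h2]
  calc ‖f t - f s‖ ≤ (ε * (∫ u in s..t, ‖f' u‖^2) + ε⁻¹ * δ)/2 := hbound
    _ ≤ (ε * C + ε⁻¹ * δ)/2 := by
        apply div_le_div_of_nonneg_right _ (by norm_num)
        exact add_le_add_left (mul_le_mul_of_nonneg_left hmono hε0.le) _
    _ = Real.sqrt C * Real.sqrt δ := hfin


end

/-- Lemma 5.1 for curves in Euclidean space: the cubics-in-tension functional is
weakly proper with respect to `C¹`: a bound on `𝒥` together with a fixed initial
point forces relative compactness in the `C¹` topology. -/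
theorem stmt7 {E : Type*} [NormedAddCommGroup E] [InnerProductSpace ℝ E]
    [FiniteDimensional ℝ E]
    (τ : ℝ) (hτ : τ ≠ 0) (p : E) (K : ℝ) (x : ℕ → ℝ → E)
    (hx : ∀ m, ContDiffOn ℝ 2 (x m) (Set.Icc 0 1))
    (hp : ∀ m, x m 0 = p)
    (hJ : ∀ m, (1/2 : ℝ) * (∫ t in (0:ℝ)..1,
        (‖iteratedDerivWithin 2 (x m) (Set.Icc 0 1) t‖ ^ 2 +
          τ ^ 2 * ‖iteratedDerivWithin 1 (x m) (Set.Icc 0 1) t‖ ^ 2)) ≤ K) :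
    ∃ φ : ℕ → ℕ, StrictMono φ ∧ ∃ y : ℝ → E,
      ContDiffOn ℝ 1 y (Set.Icc 0 1) ∧
      TendstoUniformlyOn (fun m => x (φ m)) y Filter.atTop (Set.Icc 0 1) ∧
      TendstoUniformlyOn (fun m => derivWithin (x (φ m)) (Set.Icc 0 1))
        (derivWithin y (Set.Icc 0 1)) Filter.atTop (Set.Icc 0 1) := by
  have hI : UniqueDiffOn ℝ (Icc (0:ℝ) 1) := uniqueDiffOn_Icc one_pos
  set f : ℕ → ℝ → E := fun m => derivWithin (x m) (Icc 0 1) with hfdef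
  have hf1 : ∀ m, ContDiffOn ℝ 1 (f m) (Icc 0 1) := fun m =>
    (hx m).derivWithin hI (by norm_num)
  have hfc : ∀ m, ContinuousOn (f m) (Icc 0 1) := fun m => (hf1 m).continuousOn
  have hf'c : ∀ m, ContinuousOn (derivWithin (f m) (Icc 0 1)) (Icc 0 1) := fun m =>
    (hf1 m).continuousOn_derivWithin hI le_rfl
  -- derivatives at interior points
  have hd : ∀ m, ∀ u ∈ Ioo (0:ℝ) 1, HasDerivAt (x m) (f m u) u := by
    intro m u hu
    have h1 : DifferentiableWithinAt ℝ (x m) (Icc 0 1) u :=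
      ((hx m).differentiableOn (by norm_num)) u (Ioo_subset_Icc_self hu)
    exact h1.hasDerivWithinAt.hasDerivAt (Icc_mem_nhds hu.1 hu.2)
  have hdf : ∀ m, ∀ u ∈ Ioo (0:ℝ) 1, HasDerivAt (f m) (derivWithin (f m) (Icc 0 1) u) u := by
    intro m u hu
    have h1 : DifferentiableWithinAt ℝ (f m) (Icc 0 1) u :=
      ((hf1 m).differentiableOn (by norm_num)) u (Ioo_subset_Icc_self hu)
    exact h1.hasDerivWithinAt.hasDerivAt (Icc_mem_nhds hu.1 hu.2)
  -- rewrite the integral of hJ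
  have hJ2 : ∀ m, (∫ t in (0:ℝ)..1,
      (‖derivWithin (f m) (Icc 0 1) t‖^2 + τ^2 * ‖f m t‖^2)) ≤ 2*K := by
    intro m
    have hcongr : EqOn
        (fun t => ‖iteratedDerivWithin 2 (x m) (Icc 0 1) t‖ ^ 2 +
          τ ^ 2 * ‖iteratedDerivWithin 1 (x m) (Icc 0 1) t‖ ^ 2)
        (fun t => ‖derivWithin (f m) (Icc 0 1) t‖^2 + τ^2 * ‖f m t‖^2)
        (uIcc (0:ℝ) 1) := by
      rw [uIcc_of_le (by norm_num : (0:ℝ) ≤ 1)]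
      intro t ht
      have h1 : iteratedDerivWithin 1 (x m) (Icc 0 1) t = f m t :=
        congrFun iteratedDerivWithin_one t
      have h2 : iteratedDerivWithin 2 (x m) (Icc 0 1) t
          = derivWithin (f m) (Icc 0 1) t := by
        rw [show (2:ℕ) = 1 + 1 from rfl, iteratedDerivWithin_succ]
        exact congrArg (fun g => derivWithin g (Icc 0 1) t) iteratedDerivWithin_one
      simp [h1, h2]
    rw [← intervalIntegral.integral_congr hcongr]
    linarith [hJ m]
  -- integrability
  have hint1 : ∀ m, IntervalIntegrable (fun t => ‖derivWithin (f m) (Icc 0 1) t‖^2)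
      MeasureTheory.volume 0 1 := by
    intro m
    apply ContinuousOn.intervalIntegrable
    rw [uIcc_of_le (by norm_num : (0:ℝ) ≤ 1)]
    exact (hf'c m).norm.pow 2
  have hint2 : ∀ m, IntervalIntegrable (fun t => ‖f m t‖^2) MeasureTheory.volume 0 1 := by
    intro m
    apply ContinuousOn.intervalIntegrable
    rw [uIcc_of_le (by norm_num : (0:ℝ) ≤ 1)]
    exact (hfc m).norm.pow 2
  set C : ℝ := 2*K + 2 with hCdef
  have hK : (0:ℝ) ≤ 2*K := by
    refine le_trans ?_ (hJ2 0)
    apply intervalIntegral.integral_nonneg (by norm_num)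
    intro u _
    positivity
  have hC : 0 < C := by simp only [hCdef]; linarith
  have B1 : ∀ m, (∫ t in (0:ℝ)..1, ‖derivWithin (f m) (Icc 0 1) t‖^2) ≤ C := by
    intro m
    have hsplit := intervalIntegral.integral_add (hint1 m) ((hint2 m).const_mul (τ^2))
    have h2 : 0 ≤ ∫ t in (0:ℝ)..1, τ^2 * ‖f m t‖^2 := by
      apply intervalIntegral.integral_nonneg (by norm_num)
      intro u _; positivity
    have := hJ2 m
    rw [hsplit] at this
    simp only [hCdef]; linarith
  have B2 : ∀ m, (∫ t in (0:ℝ)..1, ‖f m t‖^2) ≤ C / τ^2 := by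
    intro m
    have hsplit := intervalIntegral.integral_add (hint1 m) ((hint2 m).const_mul (τ^2))
    have h1 : 0 ≤ ∫ t in (0:ℝ)..1, ‖derivWithin (f m) (Icc 0 1) t‖^2 := by
      apply intervalIntegral.integral_nonneg (by norm_num)
      intro u _; positivity
    have := hJ2 m
    rw [hsplit, intervalIntegral.integral_const_mul] at this
    have hτ2 : (0:ℝ) < τ^2 := by positivity
    rw [le_div_iff₀ hτ2]
    calc (∫ t in (0:ℝ)..1, ‖f m t‖^2) * τ^2
        = τ^2 * ∫ t in (0:ℝ)..1, ‖f m t‖^2 := by ring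
      _ ≤ 2*K := by linarith
      _ ≤ C := by simp only [hCdef]; linarith
  -- Hölder estimate
  have hHol : ∀ m, ∀ s ∈ Icc (0:ℝ) 1, ∀ t ∈ Icc (0:ℝ) 1, s ≤ t →
      ‖f m t - f m s‖ ≤ Real.sqrt C * Real.sqrt (t - s) := fun m =>
    holder_aux (f m) (derivWithin (f m) (Icc 0 1)) C hC (hfc m) (hf'c m) (hdf m) (B1 m)
  have hHol' : ∀ m, ∀ s ∈ Icc (0:ℝ) 1, ∀ t ∈ Icc (0:ℝ) 1,
      ‖f m t - f m s‖ ≤ Real.sqrt C * Real.sqrt |t - s| := by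
    intro m s hs t ht
    rcases le_total s t with h | h
    · rw [abs_of_nonneg (by linarith)]; exact hHol m s hs t ht h
    · rw [abs_of_nonpos (by linarith), ← norm_neg, neg_sub, show -(t-s) = s - t by ring]
      exact hHol m t ht s hs h
  -- uniform bound
  set M : ℝ := Real.sqrt C / |τ| + Real.sqrt C with hMdef
  have hM : ∀ m, ∀ t ∈ Icc (0:ℝ) 1, ‖f m t‖ ≤ M := by
    intro m t ht
    obtain ⟨t₀, ht₀, hmin⟩ := isCompact_Icc.exists_isMinOn (nonempty_Icc.2 (by norm_num))
      ((hfc m).norm)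
    have h1 : ‖f m t₀‖^2 ≤ ∫ u in (0:ℝ)..1, ‖f m u‖^2 := by
      have : (∫ u in (0:ℝ)..1, ‖f m t₀‖^2) ≤ ∫ u in (0:ℝ)..1, ‖f m u‖^2 := by
        apply intervalIntegral.integral_mono_on (by norm_num) intervalIntegrable_const (hint2 m)
        intro u hu
        have := hmin hu
        simp only [mem_setOf_eq] at this
        exact pow_le_pow_left₀ (norm_nonneg _) this 2
      simpa using this
    have h2 : ‖f m t₀‖ ≤ Real.sqrt C / |τ| := by
      have h3 : ‖f m t₀‖^2 ≤ C / τ^2 := le_trans h1 (B2 m)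
      have h4 : ‖f m t₀‖ ≤ Real.sqrt (C / τ^2) := by
        rw [← Real.sqrt_sq (norm_nonneg _)]
        exact Real.sqrt_le_sqrt h3
      rwa [Real.sqrt_div hC.le, Real.sqrt_sq_eq_abs] at h4
    calc ‖f m t‖ ≤ ‖f m t₀‖ + ‖f m t - f m t₀‖ := by
          have := norm_sub_norm_le (f m t) (f m t₀); linarith [norm_sub_rev (f m t) (f m t₀)]
      _ ≤ Real.sqrt C / |τ| + Real.sqrt C * Real.sqrt |t - t₀| :=
          add_le_add h2 (hHol' m t₀ ht₀ t ht)
      _ ≤ M := by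
          simp only [hMdef]
          have hle : Real.sqrt |t - t₀| ≤ 1 := by
            rw [show (1:ℝ) = Real.sqrt 1 by simp]
            apply Real.sqrt_le_sqrt
            rw [abs_le]
            constructor <;> [linarith [ht.1, ht₀.2]; linarith [ht.2, ht₀.1]]
          have := mul_le_of_le_one_right (Real.sqrt_nonneg C) hle
          linarith
  -- Arzelà–Ascoli
  set F : ℕ → (↥(Icc (0:ℝ) 1) →ᵇ E) := fun m => BoundedContinuousFunction.mkOfCompact
    ⟨fun t => f m t, (hfc m).restrict⟩ with hFdef
  have hin : ∀ (h : ↥(Icc (0:ℝ) 1) →ᵇ E) (t : ↥(Icc (0:ℝ) 1)),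
      h ∈ Set.range F → h t ∈ Metric.closedBall (0:E) M := by
    rintro h t ⟨m, rfl⟩
    rw [Metric.mem_closedBall, dist_zero_right]
    exact hM m t t.2
  have hequi : Equicontinuous ((↑) : Set.range F → ↥(Icc (0:ℝ) 1) → E) := by
    intro t₀
    rw [Metric.equicontinuousAt_iff]
    intro ε hε
    refine ⟨(ε / (Real.sqrt C + 1))^2, by positivity, ?_⟩
    intro t hdist i
    obtain ⟨m, hm⟩ := i.2
    have hco : ∀ u : ↥(Icc (0:ℝ) 1), (i : ↥(Icc (0:ℝ) 1) → E) u = f m u := by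
      intro u; rw [← hm]; rfl
    rw [hco, hco, dist_eq_norm, norm_sub_rev]
    have hd2 : |(t : ℝ) - (t₀ : ℝ)| < (ε / (Real.sqrt C + 1))^2 := by
      rwa [Subtype.dist_eq, Real.dist_eq] at hdist
    have hsq : Real.sqrt |(t : ℝ) - (t₀ : ℝ)| < ε / (Real.sqrt C + 1) := by
      have := Real.sqrt_lt_sqrt (abs_nonneg _) hd2
      rwa [Real.sqrt_sq (by positivity)] at this
    calc ‖f m t - f m t₀‖ ≤ Real.sqrt C * Real.sqrt |(t:ℝ) - (t₀:ℝ)| :=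
          hHol' m t₀ t₀.2 t t.2
      _ ≤ Real.sqrt C * (ε / (Real.sqrt C + 1)) :=
          mul_le_mul_of_nonneg_left hsq.le (Real.sqrt_nonneg _)
      _ < ε := by
          rw [← mul_div_assoc, div_lt_iff₀ (by positivity)]
          nlinarith [Real.sqrt_nonneg C, hε]
  have hcomp := BoundedContinuousFunction.arzela_ascoli (Metric.closedBall (0:E) M)
    (isCompact_closedBall _ _) (Set.range F) hin hequi
  obtain ⟨g, -, φ, hφ, hconv⟩ :=
    hcomp.isSeqCompact (fun m => subset_closure (mem_range_self (f := F) m))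
  set G : ℝ → E := fun t => g (projIcc 0 1 zero_le_one t) with hGdef
  have hGc : Continuous G := g.continuous.comp continuous_projIcc
  have hGt : ∀ (t : ℝ) (ht : t ∈ Icc (0:ℝ) 1), G t = g ⟨t, ht⟩ := by
    intro t ht
    simp only [hGdef]
    rw [projIcc_of_mem zero_le_one ht]
  set y : ℝ → E := fun t => p + ∫ u in (0:ℝ)..t, G u with hydef
  have hyd : ∀ t, HasDerivAt y (G t) t := fun t =>
    ((hGc.integral_hasStrictDerivAt 0 t).hasDerivAt).const_add p
  have hy1 : ContDiff ℝ 1 y := by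
    rw [contDiff_one_iff_deriv]
    refine ⟨fun t => (hyd t).differentiableAt, ?_⟩
    have hdy : deriv y = G := funext fun t => (hyd t).deriv
    rw [hdy]; exact hGc
  have hyI : ∀ t ∈ Icc (0:ℝ) 1, derivWithin y (Icc 0 1) t = G t := fun t ht =>
    ((hyd t).hasDerivWithinAt).derivWithin (hI t ht)
  have hxf : ∀ m, ∀ t ∈ Icc (0:ℝ) 1, x m t = p + ∫ u in (0:ℝ)..t, f m u := by
    intro m t ht
    have h1 : (∫ u in (0:ℝ)..t, f m u) = x m t - x m 0 := by
      apply integral_eq_sub_of_hasDeriv_right_of_le ht.1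
        ((hx m).continuousOn.mono (Icc_subset_Icc le_rfl ht.2))
        (fun u hu => (hd m u ⟨hu.1, lt_of_lt_of_le hu.2 ht.2⟩).hasDerivWithinAt)
      apply ContinuousOn.intervalIntegrable
      rw [uIcc_of_le ht.1]
      exact (hfc m).mono (Icc_subset_Icc le_rfl ht.2)
    rw [h1, hp m]
    abel
  refine ⟨φ, hφ, y, hy1.contDiffOn, ?_, ?_⟩
  · rw [Metric.tendstoUniformlyOn_iff]
    intro ε hε
    have hev : ∀ᶠ n in atTop, dist ((F ∘ φ) n) g < ε/2 :=
      (Metric.tendsto_nhds.mp hconv) (ε/2) (by positivity)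
    filter_upwards [hev] with n hn t ht
    have key : ∀ u ∈ Icc (0:ℝ) 1, ‖G u - f (φ n) u‖ ≤ ε/2 := by
      intro u hu
      have heq : G u - f (φ n) u = g ⟨u, hu⟩ - F (φ n) ⟨u, hu⟩ := by
        rw [hGt u hu]; rfl
      rw [heq, ← dist_eq_norm]
      refine le_trans (BoundedContinuousFunction.dist_coe_le_dist _) ?_
      rw [dist_comm]
      exact hn.le
    have hintf : IntervalIntegrable (f (φ n)) MeasureTheory.volume 0 t := by
      apply ContinuousOn.intervalIntegrable
      rw [uIcc_of_le ht.1]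
      exact (hfc (φ n)).mono (Icc_subset_Icc le_rfl ht.2)
    have hyx : y t - x (φ n) t = ∫ u in (0:ℝ)..t, (G u - f (φ n) u) := by
      rw [hxf (φ n) t ht, hydef]
      simp only
      rw [intervalIntegral.integral_sub (hGc.intervalIntegrable 0 t) hintf]
      abel
    rw [dist_eq_norm, hyx]
    have hb1 : ‖∫ u in (0:ℝ)..t, (G u - f (φ n) u)‖ ≤ ε/2 * |t - 0| := by
      apply intervalIntegral.norm_integral_le_of_norm_le_const
      intro u hu
      rw [uIoc_of_le ht.1] at hu
      exact key u ⟨hu.1.le, le_trans hu.2 ht.2⟩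
    have ht1 : |t - 0| ≤ 1 := by
      rw [sub_zero, abs_of_nonneg ht.1]; exact ht.2
    calc ‖∫ u in (0:ℝ)..t, (G u - f (φ n) u)‖ ≤ ε/2 * |t - 0| := hb1
      _ ≤ ε/2 * 1 := mul_le_mul_of_nonneg_left ht1 (by positivity)
      _ < ε := by linarith
  · rw [Metric.tendstoUniformlyOn_iff]
    intro ε hε
    have hev : ∀ᶠ n in atTop, dist ((F ∘ φ) n) g < ε :=
      (Metric.tendsto_nhds.mp hconv) ε hε
    filter_upwards [hev] with n hn t ht
    have h1 : derivWithin y (Icc 0 1) t = g ⟨t, ht⟩ := by rw [hyI t ht, hGt t ht]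
    have h2 : derivWithin (x (φ n)) (Icc 0 1) t = F (φ n) (⟨t, ht⟩ : ↥(Icc (0:ℝ) 1)) := rfl
    rw [h1, h2]
    refine lt_of_le_of_lt (BoundedContinuousFunction.dist_coe_le_dist _) ?_
    rw [dist_comm]
    exact hn
end

section
/- Let E be a finite-dimensional real inner product space and k ≥ 1. Let B : [0,1] → (continuous bilinear forms on E) be continuous and suppose there is λ′ > 0 with B(t)(v,v) ≥ λ′‖v‖² for all t ∈ [0,1] and v ∈ E. For each pair (i,j) with 0 ≤ i, j ≤ k and i + j ≤ 2k − 1 let C_{ij} : [0,1] → (continuous bilinear forms on E) be continuous. Then there exist constants λ > 0 and c ≥ 0 such that for every k times continuously differentiable curve η : [0,1] → E, ∫₀¹ B(t)(η^{(k)}(t), η^{(k)}(t)) dt + Σ_{i+j≤2k−1} ∫₀¹ C_{ij}(t)(η^{(i)}(t), η^{(j)}(t)) dt ≥ λ Σ_{i=0}^{k} ∫₀¹ ‖η^{(i)}(t)‖² dt − c Σ_{i=0}^{k−1} ∫₀¹ ‖η^{(i)}(t)‖² dt. -/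
open Set Finset

private lemma young_aux (δ M a b L : ℝ) (hδ : 0 < δ) (hM : 0 ≤ M)
    (ha : 0 ≤ a) (hb : 0 ≤ b) (hbL : b ^ 2 ≤ L) :
    M * a * b ≤ M * δ / 2 * a ^ 2 + M * (1 + 1 / δ) * L := by
  have hL : 0 ≤ L := le_trans (sq_nonneg b) hbL
  have h1 : a * b ≤ δ / 2 * a ^ 2 + 1 / (2 * δ) * b ^ 2 := by
    rw [← sub_nonneg]
    have : δ / 2 * a ^ 2 + 1 / (2 * δ) * b ^ 2 - a * b = (δ * a - b) ^ 2 / (2 * δ) := by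
      field_simp; ring
    rw [this]; positivity
  have h2 : 1 / (2 * δ) * b ^ 2 ≤ (1 + 1 / δ) * L := by
    have e1 : 1 / (2 * δ) ≤ 1 + 1 / δ := by
      rw [div_le_iff₀ (by positivity)]
      have h : (1 / δ) * δ = 1 := by field_simp
      nlinarith [h, hδ]
    calc 1 / (2 * δ) * b ^ 2 ≤ (1 + 1 / δ) * b ^ 2 := by
          apply mul_le_mul_of_nonneg_right e1 (sq_nonneg b)
      _ ≤ (1 + 1 / δ) * L := by
          apply mul_le_mul_of_nonneg_left hbL (by positivity)
  calc M * a * b = M * (a * b) := by ring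
    _ ≤ M * (δ / 2 * a ^ 2 + 1 / (2 * δ) * b ^ 2) := mul_le_mul_of_nonneg_left h1 hM
    _ = M * δ / 2 * a ^ 2 + M * (1 / (2 * δ) * b ^ 2) := by ring
    _ ≤ M * δ / 2 * a ^ 2 + M * ((1 + 1 / δ) * L) := by
          exact add_le_add (le_refl _) (mul_le_mul_of_nonneg_left h2 hM)
    _ = M * δ / 2 * a ^ 2 + M * (1 + 1 / δ) * L := by ring

set_option maxHeartbeats 1000000 in
/-- Gårding-type inequality (local coercivity, Theorem 3.1): a coercive top-order
bilinear form plus continuous lower-order terms dominates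
`λ‖η‖²_{H^k} − c‖η‖²_{H^{k-1}}`. -/
theorem stmt8 {E : Type*} [NormedAddCommGroup E] [InnerProductSpace ℝ E]
    [FiniteDimensional ℝ E]
    (k : ℕ) (hk : 1 ≤ k)
    (B : ℝ → E →L[ℝ] E →L[ℝ] ℝ) (hB : ContinuousOn B (Set.Icc 0 1))
    (lam' : ℝ) (hlam' : 0 < lam')
    (hcoer : ∀ t ∈ Set.Icc (0:ℝ) 1, ∀ v : E, lam' * ‖v‖ ^ 2 ≤ B t v v)
    (C : ℕ → ℕ → ℝ → E →L[ℝ] E →L[ℝ] ℝ)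
    (hC : ∀ i ≤ k, ∀ j ≤ k, i + j ≤ 2 * k - 1 → ContinuousOn (C i j) (Set.Icc 0 1)) :
    ∃ lam > (0:ℝ), ∃ c ≥ (0:ℝ), ∀ η : ℝ → E, ContDiffOn ℝ k η (Set.Icc 0 1) →
      lam * (∑ i ∈ Finset.range (k+1),
          ∫ t in (0:ℝ)..1, ‖iteratedDerivWithin i η (Set.Icc 0 1) t‖ ^ 2)
        - c * (∑ i ∈ Finset.range k,
          ∫ t in (0:ℝ)..1, ‖iteratedDerivWithin i η (Set.Icc 0 1) t‖ ^ 2)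
      ≤ (∫ t in (0:ℝ)..1,
          B t (iteratedDerivWithin k η (Set.Icc 0 1) t)
            (iteratedDerivWithin k η (Set.Icc 0 1) t))
        + ∑ q ∈ (Finset.range (k+1) ×ˢ Finset.range (k+1)).filter
            (fun q => q.1 + q.2 ≤ 2 * k - 1),
            ∫ t in (0:ℝ)..1,
              C q.1 q.2 t (iteratedDerivWithin q.1 η (Set.Icc 0 1) t)
                (iteratedDerivWithin q.2 η (Set.Icc 0 1) t) := by
  classical
  set s : Set ℝ := Set.Icc 0 1 with hs
  set S : Finset (ℕ × ℕ) := (Finset.range (k+1) ×ˢ Finset.range (k+1)).filter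
      (fun q => q.1 + q.2 ≤ 2 * k - 1) with hSdef
  have hSmem : ∀ q ∈ S, q.1 ≤ k ∧ q.2 ≤ k ∧ q.1 + q.2 ≤ 2 * k - 1 := by
    intro q hq
    simp only [hSdef, Finset.mem_filter, Finset.mem_product, Finset.mem_range,
      Nat.lt_succ_iff] at hq
    exact ⟨hq.1.1, hq.1.2, hq.2⟩
  have hCcont : ∀ q ∈ S, ContinuousOn (C q.1 q.2) s := by
    intro q hq
    obtain ⟨h1, h2, h3⟩ := hSmem q hq
    exact hC q.1 h1 q.2 h2 h3
  -- uniform bound M on the norms of the C's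
  have hφ : ContinuousOn (fun t => ∑ q ∈ S, ‖C q.1 q.2 t‖) s :=
    continuousOn_finset_sum S (fun q hq =>
      ContinuousOn.norm (E := E →L[ℝ] E →L[ℝ] ℝ) (hCcont q hq))
  obtain ⟨M0, hM0⟩ := isCompact_Icc.exists_bound_of_continuousOn hφ
  set M : ℝ := max M0 1 with hMdef
  have hM1 : (1:ℝ) ≤ M := le_max_right _ _
  have hMpos : (0:ℝ) < M := lt_of_lt_of_le one_pos hM1
  have hCbound : ∀ q ∈ S, ∀ t ∈ s, ‖C q.1 q.2 t‖ ≤ M := by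
    intro q hq t ht
    calc ‖C q.1 q.2 t‖ ≤ ∑ p ∈ S, ‖C p.1 p.2 t‖ :=
          Finset.single_le_sum (f := fun p : ℕ × ℕ => ‖C p.1 p.2 t‖)
            (fun p _ => by exact norm_nonneg (C p.1 p.2 t)) hq
      _ ≤ M0 := by
          have h := hM0 t ht
          rw [Real.norm_eq_abs] at h
          exact (le_abs_self _).trans h
      _ ≤ M := le_max_left _ _
  set n : ℝ := (S.card : ℝ) with hndef
  have hn0 : (0:ℝ) ≤ n := Nat.cast_nonneg _
  obtain ⟨δ, hδpos, hδeq⟩ : ∃ δ : ℝ, 0 < δ ∧ δ * ((2 * n + 2) * M) = lam' := by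
    refine ⟨lam' / ((2 * n + 2) * M), by positivity, ?_⟩
    field_simp
  have hδtop : n * (M * δ / 2) ≤ lam' / 2 := by
    nlinarith [mul_nonneg (mul_nonneg hn0 hMpos.le) hδpos.le,
      mul_pos hMpos hδpos]
  set cbig : ℝ := M * (1 + 1 / δ) with hcbigdef
  have hcbigpos : 0 < cbig := by
    rw [hcbigdef]; positivity
  set c0 : ℝ := n * cbig with hc0def
  have hc0 : 0 ≤ c0 := mul_nonneg hn0 hcbigpos.le
  refine ⟨lam' / 2, by positivity, c0 + lam' / 2, by positivity, ?_⟩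
  intro η hη
  set u : ℕ → ℝ → E := fun i => iteratedDerivWithin i η s with hudef
  have hucont : ∀ i ≤ k, ContinuousOn (u i) s := by
    intro i hi
    exact hη.continuousOn_iteratedDerivWithin (by exact_mod_cast hi)
      (uniqueDiffOn_Icc one_pos)
  have huIcc : Set.uIcc (0:ℝ) 1 = s := Set.uIcc_of_le (by norm_num)
  -- integrands
  set F : ℝ → ℝ := fun t => B t (u k t) (u k t) with hFdef
  set G : ℕ × ℕ → ℝ → ℝ := fun q t => C q.1 q.2 t (u q.1 t) (u q.2 t) with hGdef
  have hFcont : ContinuousOn F s := (hB.clm_apply (hucont k le_rfl)).clm_apply (hucont k le_rfl)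
  have hGcont : ∀ q ∈ S, ContinuousOn (G q) s := by
    intro q hq
    obtain ⟨h1, h2, _⟩ := hSmem q hq
    exact ((hCcont q hq).clm_apply (hucont q.1 h1)).clm_apply (hucont q.2 h2)
  have hnormcont : ∀ i ≤ k, ContinuousOn (fun t => ‖u i t‖ ^ 2) s := by
    intro i hi
    exact ((hucont i hi).norm).pow 2
  have hFint : IntervalIntegrable F MeasureTheory.volume 0 1 :=
    (huIcc ▸ hFcont).intervalIntegrable
  have hGint : ∀ q ∈ S, IntervalIntegrable (G q) MeasureTheory.volume 0 1 :=
    fun q hq => (huIcc ▸ hGcont q hq).intervalIntegrable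
  have hnormint : ∀ i ≤ k, IntervalIntegrable (fun t => ‖u i t‖ ^ 2) MeasureTheory.volume 0 1 :=
    fun i hi => (huIcc ▸ hnormcont i hi).intervalIntegrable
  -- pointwise inequality
  set g : ℝ → ℝ := fun t => lam' / 2 * ‖u k t‖ ^ 2 - c0 * ∑ i ∈ Finset.range k, ‖u i t‖ ^ 2
    with hgdef
  have hgcont : ContinuousOn g s := by
    apply ContinuousOn.sub
    · exact (continuousOn_const.mul (hnormcont k le_rfl))
    · exact continuousOn_const.mul
        (continuousOn_finset_sum _ (fun i hi => hnormcont i (le_of_lt (Finset.mem_range.mp hi))))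
  have hgint : IntervalIntegrable g MeasureTheory.volume 0 1 :=
    (huIcc ▸ hgcont).intervalIntegrable
  have hpoint : ∀ t ∈ s, g t ≤ F t + ∑ q ∈ S, G q t := by
    intro t ht
    set L : ℝ := ∑ i ∈ Finset.range k, ‖u i t‖ ^ 2 with hLdef
    have hL0 : 0 ≤ L := Finset.sum_nonneg (fun i _ => sq_nonneg _)
    have hlow : ∀ m < k, ‖u m t‖ ^ 2 ≤ L :=
      fun m hm => Finset.single_le_sum (fun i _ => sq_nonneg (‖u i t‖))
        (Finset.mem_range.mpr hm)
    -- per-term bound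
    have hterm : ∀ q ∈ S, -(M * δ / 2 * ‖u k t‖ ^ 2 + cbig * L) ≤ G q t := by
      intro q hq
      obtain ⟨h1, h2, h3⟩ := hSmem q hq
      have habs : |G q t| ≤ M * ‖u q.1 t‖ * ‖u q.2 t‖ := by
        calc |G q t| = ‖(C q.1 q.2 t) (u q.1 t) (u q.2 t)‖ := (Real.norm_eq_abs _).symm
          _ ≤ ‖C q.1 q.2 t‖ * ‖u q.1 t‖ * ‖u q.2 t‖ :=
              ContinuousLinearMap.le_opNorm₂ _ _ _
          _ ≤ M * ‖u q.1 t‖ * ‖u q.2 t‖ := by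
              apply mul_le_mul_of_nonneg_right _ (norm_nonneg _)
              exact mul_le_mul_of_nonneg_right (hCbound q hq t ht) (norm_nonneg _)
      have hGlb : -(M * ‖u q.1 t‖ * ‖u q.2 t‖) ≤ G q t := neg_le_of_abs_le habs
      have hkey : M * ‖u q.1 t‖ * ‖u q.2 t‖ ≤ M * δ / 2 * ‖u k t‖ ^ 2 + cbig * L := by
        rcases eq_or_lt_of_le h1 with hq1 | hq1
        · -- q.1 = k, so q.2 < k
          have hq2 : q.2 < k := by omega
          have hy := young_aux δ M (‖u q.1 t‖) (‖u q.2 t‖) L hδpos hMpos.le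
            (norm_nonneg _) (norm_nonneg _) (hlow q.2 hq2)
          calc M * ‖u q.1 t‖ * ‖u q.2 t‖
              ≤ M * δ / 2 * ‖u q.1 t‖ ^ 2 + M * (1 + 1 / δ) * L := hy
            _ = M * δ / 2 * ‖u k t‖ ^ 2 + cbig * L := by rw [hcbigdef, hq1]
        · rcases eq_or_lt_of_le h2 with hq2 | hq2
          · -- q.2 = k, q.1 < k
            have := young_aux δ M (‖u q.2 t‖) (‖u q.1 t‖) L hδpos hMpos.le
              (norm_nonneg _) (norm_nonneg _) (hlow q.1 hq1)
            calc M * ‖u q.1 t‖ * ‖u q.2 t‖ = M * ‖u q.2 t‖ * ‖u q.1 t‖ := by ring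
              _ ≤ M * δ / 2 * ‖u q.2 t‖ ^ 2 + M * (1 + 1 / δ) * L := this
              _ = M * δ / 2 * ‖u k t‖ ^ 2 + cbig * L := by rw [hcbigdef, hq2]
          · -- both < k
            have ha := hlow q.1 hq1
            have hb := hlow q.2 hq2
            have h' : M * ‖u q.1 t‖ * ‖u q.2 t‖ ≤ cbig * L := by
              have hab : ‖u q.1 t‖ * ‖u q.2 t‖ ≤ L := by
                nlinarith [sq_nonneg (‖u q.1 t‖ - ‖u q.2 t‖), norm_nonneg (u q.1 t),
                  norm_nonneg (u q.2 t)]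
              calc M * ‖u q.1 t‖ * ‖u q.2 t‖ = M * (‖u q.1 t‖ * ‖u q.2 t‖) := by ring
                _ ≤ M * L := mul_le_mul_of_nonneg_left hab hMpos.le
                _ ≤ cbig * L := by
                    apply mul_le_mul_of_nonneg_right _ hL0
                    rw [hcbigdef]
                    nlinarith [hδpos, le_of_lt (by positivity : (0:ℝ) < 1/δ)]
            have hnn : 0 ≤ M * δ / 2 * ‖u k t‖ ^ 2 := by positivity
            linarith
      linarith
    have hsum : n * (-(M * δ / 2 * ‖u k t‖ ^ 2 + cbig * L)) ≤ ∑ q ∈ S, G q t := by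
      have := Finset.card_nsmul_le_sum S (fun q => G q t) _ hterm
      rwa [nsmul_eq_mul] at this
    have hBt := hcoer t ht (u k t)
    have huk2 : 0 ≤ ‖u k t‖ ^ 2 := sq_nonneg _
    have hnMδ : n * (M * δ / 2) ≤ lam' / 2 := hδtop
    calc g t = lam' / 2 * ‖u k t‖ ^ 2 - c0 * L := rfl
      _ ≤ lam' * ‖u k t‖ ^ 2 - n * (M * δ / 2) * ‖u k t‖ ^ 2 - n * cbig * L := by
          rw [hc0def]
          nlinarith [mul_le_mul_of_nonneg_right hnMδ huk2]
      _ = lam' * ‖u k t‖ ^ 2 + n * (-(M * δ / 2 * ‖u k t‖ ^ 2 + cbig * L)) := by ring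
      _ ≤ F t + ∑ q ∈ S, G q t := add_le_add hBt hsum
  -- integrate
  have hsumGint : IntervalIntegrable (fun t => ∑ q ∈ S, G q t)
      MeasureTheory.volume 0 1 :=
    (huIcc ▸ continuousOn_finset_sum S hGcont).intervalIntegrable
  have hRHSint : IntervalIntegrable (fun t => F t + ∑ q ∈ S, G q t)
      MeasureTheory.volume 0 1 := hFint.add hsumGint
  have hmono : (∫ t in (0:ℝ)..1, g t) ≤ ∫ t in (0:ℝ)..1, (F t + ∑ q ∈ S, G q t) :=
    intervalIntegral.integral_mono_on (by norm_num) hgint hRHSint hpoint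
  have hsplit : (∫ t in (0:ℝ)..1, (F t + ∑ q ∈ S, G q t))
      = (∫ t in (0:ℝ)..1, F t) + ∑ q ∈ S, ∫ t in (0:ℝ)..1, G q t := by
    rw [intervalIntegral.integral_add hFint hsumGint,
      intervalIntegral.integral_finset_sum (fun q _ => hGint q ‹_›)]
  have hgeq : (∫ t in (0:ℝ)..1, g t)
      = lam' / 2 * (∫ t in (0:ℝ)..1, ‖u k t‖ ^ 2)
        - c0 * ∑ i ∈ Finset.range k, ∫ t in (0:ℝ)..1, ‖u i t‖ ^ 2 := by
    have hsint : IntervalIntegrable (fun t => ∑ i ∈ Finset.range k, ‖u i t‖ ^ 2)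
        MeasureTheory.volume 0 1 :=
      (huIcc ▸ continuousOn_finset_sum (Finset.range k)
        (fun i hi => hnormcont i (le_of_lt (Finset.mem_range.mp hi)))).intervalIntegrable
    rw [hgdef]
    rw [intervalIntegral.integral_sub ((hnormint k le_rfl).const_mul _) (hsint.const_mul _),
      intervalIntegral.integral_const_mul, intervalIntegral.integral_const_mul,
      intervalIntegral.integral_finset_sum
        (fun i hi => hnormint i (le_of_lt (Finset.mem_range.mp hi)))]
  -- final algebra
  have hLHS : lam' / 2 * (∑ i ∈ Finset.range (k+1), ∫ t in (0:ℝ)..1, ‖u i t‖ ^ 2)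
      - (c0 + lam' / 2) * (∑ i ∈ Finset.range k, ∫ t in (0:ℝ)..1, ‖u i t‖ ^ 2)
      = lam' / 2 * (∫ t in (0:ℝ)..1, ‖u k t‖ ^ 2)
        - c0 * ∑ i ∈ Finset.range k, ∫ t in (0:ℝ)..1, ‖u i t‖ ^ 2 := by
    rw [Finset.sum_range_succ]; ring
  calc lam' / 2 * (∑ i ∈ Finset.range (k+1), ∫ t in (0:ℝ)..1, ‖u i t‖ ^ 2)
      - (c0 + lam' / 2) * (∑ i ∈ Finset.range k, ∫ t in (0:ℝ)..1, ‖u i t‖ ^ 2)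
      = ∫ t in (0:ℝ)..1, g t := by rw [hLHS, hgeq]
    _ ≤ ∫ t in (0:ℝ)..1, (F t + ∑ q ∈ S, G q t) := hmono
    _ = (∫ t in (0:ℝ)..1, F t) + ∑ q ∈ S, ∫ t in (0:ℝ)..1, G q t := hsplit
end

section
/- Let E be a finite-dimensional real inner product space and k ≥ 1. Let B : [0,1] × E → (continuous bilinear forms on E) be continuous with B(t,p)(v,v) ≥ λ′‖v‖² for some λ′ > 0 and all t, p, v. Let 𝒜 be a finite set of multi-indices α = (α₁,…,α_r) with r ≥ 1, 1 ≤ αᵢ ≤ k, Σᵢ αᵢ ≤ 2k and α ≠ (k,k), and for each α ∈ 𝒜 let A_α : [0,1] × E → (continuous r-linear forms on E) be continuous; let also A₀ : [0,1] × E → ℝ be continuous. For a k times continuously differentiable curve ξ : [0,1] → E set J(ξ) = ∫₀¹ [ B(t,ξ(t))(ξ^{(k)}(t), ξ^{(k)}(t)) + Σ_{α∈𝒜} A_α(t,ξ(t))(ξ^{(α₁)}(t),…,ξ^{(α_r)}(t)) + A₀(t,ξ(t)) ] dt. Then for all constants K and L there exists a constant N such that every k times continuously differentiable ξ : [0,1]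 → E with max_{0≤i≤k−1} sup_{t∈[0,1]} ‖ξ^{(i)}(t)‖ ≤ K and J(ξ) ≤ L satisfies Σ_{i=0}^{k} ∫₀¹ ‖ξ^{(i)}(t)‖² dt ≤ N. -/
lemma aux_two_k {r k : ℕ} (α : Fin r → ℕ) (h1 : ∀ i, 1 ≤ α i)
    (hw : ∑ i, α i ≤ 2 * k) (hne : ¬(r = 2 ∧ ∀ i, α i = k))
    {i j : Fin r} (hij : i ≠ j) (hi : α i = k) (hj : α j = k) : False := by
  have hji : j ∈ Finset.univ.erase i :=
    Finset.mem_erase.2 ⟨fun h => hij h.symm, Finset.mem_univ j⟩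
  have e1 : α i + ∑ l ∈ Finset.univ.erase i, α l = ∑ l, α l :=
    Finset.add_sum_erase _ _ (Finset.mem_univ i)
  have e2 : α j + ∑ l ∈ (Finset.univ.erase i).erase j, α l
      = ∑ l ∈ Finset.univ.erase i, α l := Finset.add_sum_erase _ _ hji
  have e3 : ((Finset.univ.erase i).erase j).card • 1
      ≤ ∑ l ∈ (Finset.univ.erase i).erase j, α l :=
    Finset.card_nsmul_le_sum _ _ _ (fun x _ => h1 x)
  have hcard : ((Finset.univ.erase i).erase j).card = r - 2 := by
    rw [Finset.card_erase_of_mem hji, Finset.card_erase_of_mem (Finset.mem_univ i),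
      Finset.card_univ, Fintype.card_fin]; omega
  have hvij : (i : ℕ) ≠ (j : ℕ) := fun h => hij (Fin.ext h)
  have hr2 : r = 2 := by
    have hi2 := i.isLt
    have hj2 := j.isLt
    simp only [smul_eq_mul, mul_one, hcard] at e3
    have hk1 : 1 ≤ k := hi ▸ h1 i
    omega
  refine hne ⟨hr2, fun l => ?_⟩
  have hempty : ((Finset.univ.erase i).erase j).card = 0 := by omega
  rcases eq_or_ne l i with rfl | hli
  · exact hi
  rcases eq_or_ne l j with rfl | hlj
  · exact hj
  exfalso
  have : l ∈ (Finset.univ.erase i).erase j :=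
    Finset.mem_erase.2 ⟨hlj, Finset.mem_erase.2 ⟨hli, Finset.mem_univ l⟩⟩
  have := Finset.card_eq_zero.1 hempty
  simp [this] at *

lemma aux_prod {r : ℕ} (hr : 1 ≤ r) (f : Fin r → ℝ) (Kc c : ℝ) (hK : 0 ≤ Kc) (hKc : Kc ≤ c)
    (h0 : ∀ i, 0 ≤ f i) (hc : ∀ i, f i ≤ c)
    (hone : ∀ i j, i ≠ j → Kc < f i → Kc < f j → False) :
    ∏ i, f i ≤ Kc ^ (r - 1) * c := by
  by_cases hex : ∃ i, Kc < f i
  · obtain ⟨i, hi⟩ := hex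
    rw [← Finset.mul_prod_erase _ _ (Finset.mem_univ i)]
    have h2 : ∏ l ∈ Finset.univ.erase i, f l ≤ ∏ _l ∈ Finset.univ.erase i, Kc :=
      Finset.prod_le_prod (fun l _ => h0 l)
        (fun l hl => le_of_not_gt fun h =>
          hone l i (Finset.mem_erase.1 hl).1 h hi)
    rw [Finset.prod_const, Finset.card_erase_of_mem (Finset.mem_univ i),
      Finset.card_univ, Fintype.card_fin] at h2
    have h3 : 0 ≤ ∏ l ∈ Finset.univ.erase i, f l :=
      Finset.prod_nonneg (fun l _ => h0 l)
    calc f i * ∏ l ∈ Finset.univ.erase i, f l ≤ c * (Kc ^ (r - 1)) :=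
          mul_le_mul (hc i) h2 h3 (hK.trans hKc)
      _ = Kc ^ (r - 1) * c := mul_comm _ _
  · push_neg at hex
    calc ∏ i, f i ≤ ∏ _i : Fin r, Kc := Finset.prod_le_prod (fun l _ => h0 l) (fun l _ => hex l)
      _ = Kc ^ r := by rw [Finset.prod_const, Finset.card_univ, Fintype.card_fin]
      _ = Kc ^ (r - 1) * Kc := by rw [← pow_succ]; congr 1; omega
      _ ≤ Kc ^ (r - 1) * c := mul_le_mul_of_nonneg_left hKc (pow_nonneg hK _)

/-- Locally bounding assertion of Theorem 3.1 in a chart: for the action `J` of a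
strongly elliptic polynomial differential operator of order `k` and weight `2k`,
a bound on `J` together with a `C^{k-1}` bound forces an `H^k` bound. -/
theorem stmt9 {E : Type*} [NormedAddCommGroup E] [InnerProductSpace ℝ E]
    [FiniteDimensional ℝ E]
    (k : ℕ) (hk : 1 ≤ k)
    (B : ℝ × E → E →L[ℝ] E →L[ℝ] ℝ) (hB : Continuous B)
    (lam' : ℝ) (hlam' : 0 < lam')
    (hcoer : ∀ (t : ℝ) (p : E) (v : E), lam' * ‖v‖ ^ 2 ≤ B (t, p) v v)
    {ι : Type*} [Fintype ι] (r : ι → ℕ) (hr : ∀ a, 1 ≤ r a)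
    (α : (a : ι) → Fin (r a) → ℕ)
    (hα1 : ∀ a i, 1 ≤ α a i) (hαk : ∀ a i, α a i ≤ k)
    (hαw : ∀ a, (∑ i, α a i) ≤ 2 * k)
    (hαne : ∀ a, ¬ (r a = 2 ∧ ∀ i, α a i = k))
    (A : (a : ι) → ℝ × E → ContinuousMultilinearMap ℝ (fun _ : Fin (r a) => E) ℝ)
    (hA : ∀ a, Continuous (A a))
    (A₀ : ℝ × E → ℝ) (hA₀ : Continuous A₀) :
    ∀ K L : ℝ, ∃ N : ℝ, ∀ ξ : ℝ → E, ContDiffOn ℝ k ξ (Set.Icc 0 1) →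
      (∀ i ≤ k - 1, ∀ t ∈ Set.Icc (0:ℝ) 1,
          ‖iteratedDerivWithin i ξ (Set.Icc 0 1) t‖ ≤ K) →
      (∫ t in (0:ℝ)..1,
          (B (t, ξ t) (iteratedDerivWithin k ξ (Set.Icc 0 1) t)
              (iteratedDerivWithin k ξ (Set.Icc 0 1) t)
            + ∑ a, A a (t, ξ t) (fun i => iteratedDerivWithin (α a i) ξ (Set.Icc 0 1) t)
            + A₀ (t, ξ t))) ≤ L →
      (∑ i ∈ Finset.range (k+1),
          ∫ t in (0:ℝ)..1, ‖iteratedDerivWithin i ξ (Set.Icc 0 1) t‖ ^ 2) ≤ N := by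
  intro K L
  have hs : UniqueDiffOn ℝ (Set.Icc (0:ℝ) 1) := uniqueDiffOn_Icc zero_lt_one
  set K' : ℝ := max K 0 with hK'def
  have hK'0 : (0:ℝ) ≤ K' := le_max_right _ _
  have hCpt : IsCompact ((Set.Icc (0:ℝ) 1) ×ˢ Metric.closedBall (0:E) K') :=
    isCompact_Icc.prod (isCompact_closedBall _ _)
  choose M hM using fun a => hCpt.exists_bound_of_continuousOn (hA a).continuousOn
  obtain ⟨M₀, hM₀⟩ := hCpt.exists_bound_of_continuousOn hA₀.continuousOn
  set C₂ : ℝ := ∑ a, max (M a) 0 * K' ^ (r a - 1) with hC₂def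
  have hC₂0 : 0 ≤ C₂ :=
    Finset.sum_nonneg fun a _ => mul_nonneg (le_max_right _ _) (pow_nonneg hK'0 _)
  set C₃ : ℝ := C₂ * K' + max M₀ 0 + C₂ ^ 2 / (2 * lam') with hC₃def
  refine ⟨(k : ℝ) * K' ^ 2 + (L + C₃) / (lam' / 2), ?_⟩
  intro ξ hξ hC hJ
  have hDcont : ∀ m, m ≤ k →
      ContinuousOn (iteratedDerivWithin m ξ (Set.Icc 0 1)) (Set.Icc (0:ℝ) 1) :=
    fun m hm => hξ.continuousOn_iteratedDerivWithin (by exact_mod_cast hm) hs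
  have hC' : ∀ i, i ≤ k - 1 → ∀ t ∈ Set.Icc (0:ℝ) 1,
      ‖iteratedDerivWithin i ξ (Set.Icc 0 1) t‖ ≤ K' :=
    fun i hi t ht => (hC i hi t ht).trans (le_max_left _ _)
  have hmem : ∀ t ∈ Set.Icc (0:ℝ) 1,
      (t, ξ t) ∈ (Set.Icc (0:ℝ) 1) ×ˢ Metric.closedBall (0:E) K' := by
    intro t ht
    refine ⟨ht, Metric.mem_closedBall.2 ?_⟩
    rw [dist_zero_right]
    have h0 := hC' 0 (Nat.zero_le _) t ht
    rwa [iteratedDerivWithin_zero] at h0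
  -- pointwise lower bound for the integrand
  have key : ∀ t ∈ Set.Icc (0:ℝ) 1,
      lam' / 2 * ‖iteratedDerivWithin k ξ (Set.Icc 0 1) t‖ ^ 2 - C₃ ≤
        B (t, ξ t) (iteratedDerivWithin k ξ (Set.Icc 0 1) t)
            (iteratedDerivWithin k ξ (Set.Icc 0 1) t)
          + ∑ a, A a (t, ξ t) (fun i => iteratedDerivWithin (α a i) ξ (Set.Icc 0 1) t)
          + A₀ (t, ξ t) := by
    intro t ht
    set x : ℝ := ‖iteratedDerivWithin k ξ (Set.Icc 0 1) t‖ with hxdef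
    have hx0 : 0 ≤ x := norm_nonneg _
    have hBt : lam' * x ^ 2 ≤ B (t, ξ t) (iteratedDerivWithin k ξ (Set.Icc 0 1) t)
        (iteratedDerivWithin k ξ (Set.Icc 0 1) t) := hcoer t (ξ t) _
    have hA0t : -(max M₀ 0) ≤ A₀ (t, ξ t) := by
      have h1 := hM₀ _ (hmem t ht)
      rw [Real.norm_eq_abs] at h1
      exact (abs_le.1 (h1.trans (le_max_left _ _))).1
    have hAt : ∀ a, -(max (M a) 0 * K' ^ (r a - 1) * (K' + x)) ≤
        A a (t, ξ t) (fun i => iteratedDerivWithin (α a i) ξ (Set.Icc 0 1) t) := by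
      intro a
      have hprod : (∏ i, ‖iteratedDerivWithin (α a i) ξ (Set.Icc 0 1) t‖)
          ≤ K' ^ (r a - 1) * (K' + x) := by
        refine aux_prod (hr a) _ K' (K' + x) hK'0 (by linarith) (fun i => norm_nonneg _)
          ?_ ?_
        · intro i
          rcases eq_or_lt_of_le (hαk a i) with he | hlt
          · rw [he]; linarith
          · have hle : α a i ≤ k - 1 := by omega
            exact (hC' _ hle t ht).trans (by linarith)
        · intro i j hij hi hj
          have hik : α a i = k := by
            by_contra h
            have hle : α a i ≤ k - 1 := by have := hαk a i; omega
            exact absurd (hC' _ hle t ht) (not_le.2 hi)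
          have hjk : α a j = k := by
            by_contra h
            have hle : α a j ≤ k - 1 := by have := hαk a j; omega
            exact absurd (hC' _ hle t ht) (not_le.2 hj)
          exact aux_two_k (α a) (hα1 a) (hαw a) (hαne a) hij hik hjk
      have hle := (A a (t, ξ t)).le_opNorm
        (fun i => iteratedDerivWithin (α a i) ξ (Set.Icc 0 1) t)
      have hnorm : ‖A a (t, ξ t)‖ ≤ max (M a) 0 := (hM a _ (hmem t ht)).trans (le_max_left _ _)
      have habs : ‖A a (t, ξ t) (fun i => iteratedDerivWithin (α a i) ξ (Set.Icc 0 1) t)‖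
          ≤ max (M a) 0 * (K' ^ (r a - 1) * (K' + x)) :=
        hle.trans (mul_le_mul hnorm hprod (Finset.prod_nonneg fun l _ => norm_nonneg _)
          (le_max_right _ _))
      rw [Real.norm_eq_abs] at habs
      have := (abs_le.1 habs).1
      rw [mul_assoc]
      exact this
    have hsum : -(C₂ * (K' + x)) ≤
        ∑ a, A a (t, ξ t) (fun i => iteratedDerivWithin (α a i) ξ (Set.Icc 0 1) t) := by
      have h1 : ∑ a, -(max (M a) 0 * K' ^ (r a - 1) * (K' + x)) ≤
          ∑ a, A a (t, ξ t) (fun i => iteratedDerivWithin (α a i) ξ (Set.Icc 0 1) t) :=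
        Finset.sum_le_sum fun a _ => hAt a
      have h2 : -(C₂ * (K' + x)) = ∑ a, -(max (M a) 0 * K' ^ (r a - 1) * (K' + x)) := by
        rw [hC₂def, Finset.sum_mul, ← Finset.sum_neg_distrib]
      rw [h2]; exact h1
    have hdiv : C₂ ^ 2 / (2 * lam') * (2 * lam') = C₂ ^ 2 :=
      div_mul_cancel₀ _ (by positivity)
    rw [hC₃def]
    nlinarith [sq_nonneg (lam' * x - C₂), hlam', hC₂0, hx0, hK'0, hBt, hA0t, hsum, hdiv,
      mul_pos hlam' hlam']
  -- continuity and integrability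
  have hDkcont := hDcont k le_rfl
  have hidcont : ContinuousOn (fun t : ℝ => (t, ξ t)) (Set.Icc (0:ℝ) 1) :=
    ContinuousOn.prodMk continuousOn_id hξ.continuousOn
  have hgcont : ContinuousOn (fun t =>
      B (t, ξ t) (iteratedDerivWithin k ξ (Set.Icc 0 1) t)
          (iteratedDerivWithin k ξ (Set.Icc 0 1) t)
        + ∑ a, A a (t, ξ t) (fun i => iteratedDerivWithin (α a i) ξ (Set.Icc 0 1) t)
        + A₀ (t, ξ t)) (Set.Icc (0:ℝ) 1) := by
    refine ContinuousOn.add (ContinuousOn.add ?_ ?_) ?_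
    · exact ((hB.comp_continuousOn hidcont).clm_apply hDkcont).clm_apply hDkcont
    · refine continuousOn_finset_sum _ fun a _ => ?_
      exact continuous_eval.comp_continuousOn
        (((hA a).comp_continuousOn hidcont).prodMk
          (continuousOn_pi.2 fun i => hDcont _ (hαk a i)))
    · exact hA₀.comp_continuousOn hidcont
  have hhcont : ContinuousOn
      (fun t => lam' / 2 * ‖iteratedDerivWithin k ξ (Set.Icc 0 1) t‖ ^ 2 - C₃)
      (Set.Icc (0:ℝ) 1) :=
    (continuousOn_const.mul (hDkcont.norm.pow 2)).sub continuousOn_const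
  have huIcc : Set.uIcc (0:ℝ) 1 = Set.Icc 0 1 := Set.uIcc_of_le zero_le_one
  have hgint : IntervalIntegrable (fun t =>
      B (t, ξ t) (iteratedDerivWithin k ξ (Set.Icc 0 1) t)
          (iteratedDerivWithin k ξ (Set.Icc 0 1) t)
        + ∑ a, A a (t, ξ t) (fun i => iteratedDerivWithin (α a i) ξ (Set.Icc 0 1) t)
        + A₀ (t, ξ t)) MeasureTheory.volume 0 1 := by
    apply ContinuousOn.intervalIntegrable; rwa [huIcc]
  have hi2int : ∀ i, i ≤ k → IntervalIntegrable
      (fun t => ‖iteratedDerivWithin i ξ (Set.Icc 0 1) t‖ ^ 2)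
      MeasureTheory.volume 0 1 := by
    intro i hi
    apply ContinuousOn.intervalIntegrable
    rw [huIcc]
    exact (hDcont i hi).norm.pow 2
  have hhint : IntervalIntegrable
      (fun t => lam' / 2 * ‖iteratedDerivWithin k ξ (Set.Icc 0 1) t‖ ^ 2 - C₃)
      MeasureTheory.volume 0 1 := by
    apply ContinuousOn.intervalIntegrable; rwa [huIcc]
  have h1 : (∫ t in (0:ℝ)..1,
      (lam' / 2 * ‖iteratedDerivWithin k ξ (Set.Icc 0 1) t‖ ^ 2 - C₃)) ≤ L :=
    le_trans (intervalIntegral.integral_mono_on zero_le_one hhint hgint key) hJ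
  have h2 : (∫ t in (0:ℝ)..1,
      (lam' / 2 * ‖iteratedDerivWithin k ξ (Set.Icc 0 1) t‖ ^ 2 - C₃))
      = lam' / 2 * (∫ t in (0:ℝ)..1, ‖iteratedDerivWithin k ξ (Set.Icc 0 1) t‖ ^ 2) - C₃ := by
    rw [intervalIntegral.integral_sub ((hi2int k le_rfl).const_mul _)
      intervalIntegrable_const, intervalIntegral.integral_const_mul,
      intervalIntegral.integral_const]
    simp
  have hIk : (∫ t in (0:ℝ)..1, ‖iteratedDerivWithin k ξ (Set.Icc 0 1) t‖ ^ 2)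
      ≤ (L + C₃) / (lam' / 2) :=
    (le_div_iff₀' (by positivity)).2 (by linarith)
  have hIlow : ∀ i ∈ Finset.range k,
      (∫ t in (0:ℝ)..1, ‖iteratedDerivWithin i ξ (Set.Icc 0 1) t‖ ^ 2) ≤ K' ^ 2 := by
    intro i hi
    have hik : i ≤ k - 1 := by have := Finset.mem_range.1 hi; omega
    have hb : ∀ t ∈ Set.Icc (0:ℝ) 1,
        ‖iteratedDerivWithin i ξ (Set.Icc 0 1) t‖ ^ 2 ≤ K' ^ 2 :=
      fun t ht => pow_le_pow_left₀ (norm_nonneg _) (hC' i hik t ht) 2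
    calc (∫ t in (0:ℝ)..1, ‖iteratedDerivWithin i ξ (Set.Icc 0 1) t‖ ^ 2)
        ≤ ∫ _t in (0:ℝ)..1, K' ^ 2 :=
          intervalIntegral.integral_mono_on zero_le_one (hi2int i (by omega))
            intervalIntegrable_const hb
      _ = K' ^ 2 := by simp
  rw [Finset.sum_range_succ]
  have hsumlow : (∑ i ∈ Finset.range k,
      ∫ t in (0:ℝ)..1, ‖iteratedDerivWithin i ξ (Set.Icc 0 1) t‖ ^ 2) ≤ (k : ℝ) * K' ^ 2 := by
    calc (∑ i ∈ Finset.range k,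
        ∫ t in (0:ℝ)..1, ‖iteratedDerivWithin i ξ (Set.Icc 0 1) t‖ ^ 2)
        ≤ ∑ _i ∈ Finset.range k, K' ^ 2 := Finset.sum_le_sum hIlow
      _ = (k : ℝ) * K' ^ 2 := by simp [Finset.sum_const, Finset.card_range, nsmul_eq_mul]
  linarith
end

section
/- Let X be a path-connected topological space, n ≥ 2, let 0 = t₀ < t₁ < … < t_{n−1} = 1 be real numbers and p₀, …, p_{n−1} ∈ X. Then the subspace {x ∈ C([0,1],X) : x(tᵢ) = pᵢ for all 0 ≤ i ≤ n−1} of the space of continuous maps [0,1] → X with the compact-open topology is homotopy equivalent to the (n−1)-fold product (Ω_{p₀}X)^{n−1}, where Ω_{p₀}X is the space of loops at p₀ in X with the compact-open topology. -/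
open unitInterval Set

namespace Cor56

variable {X : Type*} [TopologicalSpace X]

section PathHE

variable {a b c : X}

/-- Left concatenation with a fixed path, as a continuous map between path spaces. -/
noncomputable def transL (c : X) (γ : Path a b) : C(Path b c, Path a c) :=
  ⟨fun p => γ.trans p, continuous_const.path_trans continuous_id⟩

lemma denom_pos (u : I) : (0:ℝ) < 1 - 3 * (u:ℝ) / 4 := by
  have := u.2.2; linarith

/-- The raw homotopy formula shrinking the detour `γ.symm.trans (γ.trans p)` to `p`. -/
noncomputable def Hraw (γ : Path a b) (w : (I × Path b c) × I) : X :=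
  if (w.2 : ℝ) ≤ (w.1.1 : ℝ) / 2 then γ.extend (1 - 2 * (w.2 : ℝ))
  else if (w.2 : ℝ) ≤ 3 * (w.1.1 : ℝ) / 4 then γ.extend (1 + 4 * (w.2:ℝ) - 3 * (w.1.1:ℝ))
  else w.1.2.extend (((w.2:ℝ) - 3 * (w.1.1:ℝ) / 4) / (1 - 3 * (w.1.1:ℝ) / 4))

lemma Hraw_cont (γ : Path a b) : Continuous (Hraw (c := c) γ) := by
  have hs : Continuous fun w : (I × Path b c) × I => (w.2 : ℝ) :=
    continuous_subtype_val.comp continuous_snd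
  have hu : Continuous fun w : (I × Path b c) × I => (w.1.1 : ℝ) :=
    continuous_subtype_val.comp (continuous_fst.comp continuous_fst)
  have hfam : Continuous ↿fun z : I × Path b c => ⇑z.2.extend :=
    Path.continuous_uncurry_extend_of_continuous_family (fun z : I × Path b c => z.2)
      ((continuous_snd.comp continuous_fst).eval continuous_snd)
  have hr : Continuous fun w : (I × Path b c) × I =>
      (((w.2:ℝ) - 3 * (w.1.1:ℝ) / 4) / (1 - 3 * (w.1.1:ℝ) / 4)) := by
    refine Continuous.div (by fun_prop) (by fun_prop) ?_
    intro w; exact ne_of_gt (denom_pos w.1.1)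
  have h3 : Continuous fun w : (I × Path b c) × I =>
      w.1.2.extend (((w.2:ℝ) - 3 * (w.1.1:ℝ) / 4) / (1 - 3 * (w.1.1:ℝ) / 4)) := by
    exact hfam.comp (continuous_fst.prodMk hr)
  unfold Hraw
  refine Continuous.if_le ?_ ?_ hs (by fun_prop) ?_
  · exact γ.continuous_extend.comp (by fun_prop)
  · refine Continuous.if_le ?_ h3 hs (by fun_prop) ?_
    · exact γ.continuous_extend.comp (by fun_prop)
    · intro w hw
      rw [hw]
      have : (1 : ℝ) + 4 * (3 * (w.1.1:ℝ) / 4) - 3 * (w.1.1:ℝ) = 1 := by ring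
      rw [this, γ.extend_one]
      have : ((3 * (w.1.1:ℝ) / 4 - 3 * (w.1.1:ℝ) / 4) / (1 - 3 * (w.1.1:ℝ) / 4)) = 0 := by
        rw [sub_self, zero_div]
      rw [this, Path.extend_zero]
  · intro w hw
    have hu0 : (0:ℝ) ≤ (w.1.1:ℝ) := w.1.1.2.1
    rw [if_pos (by rw [hw]; linarith)]
    rw [hw]; congr 1; ring

/-- The homotopy, at stage `u`, applied to `p`, as a path. -/
noncomputable def Hfun (γ : Path a b) (q : I × Path b c) : Path b c where
  toFun s := Hraw γ (q, s)
  continuous_toFun := (Hraw_cont γ).comp (Continuous.prodMk_right q)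
  source' := by
    have h : ((0:I):ℝ) ≤ (q.1:ℝ) / 2 := by
      have := q.1.2.1; simp; linarith
    simp only [Hraw, if_pos h]
    norm_num
  target' := by
    have hu1 : (q.1:ℝ) ≤ 1 := q.1.2.2
    have h1 : ¬ ((1:I):ℝ) ≤ (q.1:ℝ) / 2 := by simp; linarith
    have h2 : ¬ ((1:I):ℝ) ≤ 3 * (q.1:ℝ) / 4 := by simp; linarith
    simp only [Hraw, if_neg h1, if_neg h2]
    rw [show (((1:I):ℝ) - 3 * (q.1:ℝ) / 4) / (1 - 3 * (q.1:ℝ) / 4) = 1 by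
      rw [Icc.coe_one]; exact div_self (ne_of_gt (denom_pos q.1))]
    exact q.2.extend_one

/-- The homotopy from the identity to `p ↦ γ.symm.trans (γ.trans p)`. -/
noncomputable def homLL (γ : Path a b) (c : X) :
    ContinuousMap.Homotopy (ContinuousMap.id (Path b c))
      ((transL c γ.symm).comp (transL c γ)) where
  toFun q := Hfun γ q
  continuous_toFun := by
    apply Path.continuous_uncurry_iff.mp
    exact (Hraw_cont γ).congr fun w => rfl
  map_zero_left p := by
    ext s
    show Hraw γ ((0, p), s) = p s
    have hs0 : (0:ℝ) ≤ (s:ℝ) := s.2.1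
    by_cases h : (s:ℝ) ≤ ((0:I):ℝ) / 2
    · simp only [Hraw]
      rw [if_pos h]
      have hseq : s = 0 := Subtype.ext (le_antisymm (by simpa using h) hs0)
      rw [hseq]
      rw [show (1:ℝ) - 2 * ((0:I):ℝ) = 1 by norm_num, γ.extend_one]
      exact p.source.symm
    · have h2 : ¬ ((s:ℝ) ≤ 3 * ((0:I):ℝ) / 4) := by simpa using h
      simp only [Hraw]
      rw [if_neg h, if_neg h2]
      rw [show ((s:ℝ) - 3 * ((0:I):ℝ) / 4) / (1 - 3 * ((0:I):ℝ) / 4) = (s:ℝ) by simp]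
      exact p.extend_extends' s
  map_one_left p := by
    ext s
    show Hraw γ ((1, p), s) = (γ.symm.trans (γ.trans p)) s
    have hs0 : (0:ℝ) ≤ (s:ℝ) := s.2.1
    have hs1 : (s:ℝ) ≤ 1 := s.2.2
    rw [Path.trans_apply]
    by_cases h : (s:ℝ) ≤ 1/2
    · rw [dif_pos h]
      simp only [Hraw]
      rw [if_pos (by rw [Icc.coe_one]; linarith)]
      rw [γ.extend_apply (t := 1 - 2*(s:ℝ)) ⟨by linarith, by linarith⟩]
      rw [Path.symm_apply]
      simp only [Function.comp_apply]
      exact congrArg γ (Subtype.ext (by rw [coe_symm_eq]))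
    · rw [dif_neg h]
      rw [Path.trans_apply]
      push_neg at h
      simp only [Hraw, Icc.coe_one]
      rw [if_neg (by push_neg; linarith)]
      by_cases h2 : (s:ℝ) ≤ 3/4
      · rw [if_pos (by linarith)]
        rw [dif_pos (show 2*(s:ℝ)-1 ≤ 1/2 by linarith)]
        rw [γ.extend_apply (t := 1 + 4*(s:ℝ) - 3*1) ⟨by linarith, by linarith⟩]
        congr 1
        exact Subtype.ext (by push_cast; ring)
      · rw [if_neg (by linarith)]
        rw [dif_neg (show ¬(2*(s:ℝ)-1 ≤ 1/2) by push_neg; linarith)]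
        rw [show ((s:ℝ) - 3*1/4)/(1 - 3*1/4) = 4*(s:ℝ) - 3 by field_simp; ring]
        rw [p.extend_apply (t := 4*(s:ℝ) - 3) ⟨by linarith, by linarith⟩]
        congr 1
        exact Subtype.ext (by push_cast; ring)

/-- Left concatenation is a homotopy equivalence of path spaces. -/
noncomputable def HE_L (c : X) (γ : Path a b) :
    ContinuousMap.HomotopyEquiv (Path b c) (Path a c) where
  toFun := transL c γ
  invFun := transL c γ.symm
  left_inv := ⟨(homLL γ c).symm⟩
  right_inv := by
    have h := (homLL γ.symm c).symm
    rw [Path.symm_symm] at h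
    exact ⟨h⟩

/-- Path reversal as a homeomorphism of path spaces. -/
noncomputable def symmHomeo (a b : X) : Path a b ≃ₜ Path b a where
  toFun := Path.symm
  invFun := Path.symm
  left_inv := Path.symm_symm
  right_inv := Path.symm_symm
  continuous_toFun := Path.continuous_symm
  continuous_invFun := Path.continuous_symm

/-- Right concatenation is a homotopy equivalence of path spaces. -/
noncomputable def HE_R (a : X) {b c : X} (δ : Path b c) :
    ContinuousMap.HomotopyEquiv (Path a b) (Path a c) :=
  ((symmHomeo a b).toHomotopyEquiv.trans (HE_L a δ.symm)).trans
    (symmHomeo c a).toHomotopyEquiv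

/-- In a path-connected space, all path spaces are homotopy equivalent. -/
noncomputable def pathHE [PathConnectedSpace X] (x y z w : X) :
    ContinuousMap.HomotopyEquiv (Path x y) (Path z w) :=
  (HE_L y (PathConnectedSpace.somePath z x)).trans
    (HE_R z (PathConnectedSpace.somePath y w))

end PathHE

section Interp

variable {n : ℕ} (t : Fin n → ℝ) (p : Fin n → X)

/-- left endpoint index -/
def A (i : Fin (n - 1)) : Fin n := Fin.castLE (Nat.sub_le n 1) i

/-- right endpoint index -/
def B (i : Fin (n - 1)) : Fin n := ⟨i.1 + 1, by have := i.isLt; omega⟩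

lemma A_lt_B (i : Fin (n - 1)) : A i < B i := by
  simp [A, B, Fin.lt_def]

lemma t_A_lt_B (ht : StrictMono t) (i : Fin (n - 1)) : t (A i) < t (B i) :=
  ht (A_lt_B i)

lemma affine_mem (ht : StrictMono t) (hmem : ∀ i, t i ∈ unitInterval)
    (i : Fin (n - 1)) (s : I) :
    t (A i) + (s : ℝ) * (t (B i) - t (A i)) ∈ unitInterval := by
  have h1 := (hmem (A i)).1
  have h2 := (hmem (B i)).2
  have h3 := (t_A_lt_B t ht i).le
  have h4 := s.2.1
  have h5 := s.2.2
  constructor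
  · nlinarith
  · nlinarith

/-- affine parametrization of the `i`-th subinterval -/
noncomputable def sigma (ht : StrictMono t) (hmem : ∀ i, t i ∈ unitInterval)
    (i : Fin (n - 1)) : C(I, I) where
  toFun s := ⟨t (A i) + (s : ℝ) * (t (B i) - t (A i)), affine_mem t ht hmem i s⟩
  continuous_toFun := Continuous.subtype_mk (by fun_prop) _

/-- inverse affine parametrization, clamped -/
noncomputable def rho (i : Fin (n - 1)) (r : ℝ) : I :=
  Set.projIcc 0 1 zero_le_one ((r - t (A i)) / (t (B i) - t (A i)))

lemma rho_cont (i : Fin (n - 1)) : Continuous (rho t i) :=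
  continuous_projIcc.comp (by fun_prop)

lemma rho_left (i : Fin (n - 1)) : rho t i (t (A i)) = 0 := by
  simp only [rho, sub_self, zero_div]
  exact Subtype.ext (by rw [Set.projIcc_left]; rfl)

lemma rho_right (ht : StrictMono t) (i : Fin (n - 1)) : rho t i (t (B i)) = 1 := by
  simp only [rho]
  rw [div_self (ne_of_gt (sub_pos.2 (t_A_lt_B t ht i)))]
  exact Subtype.ext (by rw [Set.projIcc_right]; rfl)

lemma rho_affine (ht : StrictMono t) (i : Fin (n - 1)) (s : I) :
    rho t i (t (A i) + (s:ℝ) * (t (B i) - t (A i))) = s := by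
  have hd := ne_of_gt (sub_pos.2 (t_A_lt_B t ht i))
  simp only [rho, add_sub_cancel_left]
  rw [mul_div_assoc, div_self hd, mul_one, Set.projIcc_of_mem zero_le_one s.2]

lemma affine_rho (ht : StrictMono t) (i : Fin (n - 1)) (r : ℝ)
    (h1 : t (A i) ≤ r) (h2 : r ≤ t (B i)) :
    t (A i) + ((rho t i r : ℝ)) * (t (B i) - t (A i)) = r := by
  have hd : (0:ℝ) < t (B i) - t (A i) := sub_pos.2 (t_A_lt_B t ht i)
  have hmem : (r - t (A i)) / (t (B i) - t (A i)) ∈ Set.Icc (0:ℝ) 1 := by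
    constructor
    · exact div_nonneg (by linarith) hd.le
    · rw [div_le_one hd]; linarith
  simp only [rho, Set.projIcc_of_mem zero_le_one hmem]
  field_simp
  ring

/-- The type of tuples of paths between consecutive interpolation points. -/
abbrev InterpPaths : Type _ := ∀ j : Fin (n - 1), Path (p (A j)) (p (B j))

lemma exists_interval (hn : 2 ≤ n) (ht : StrictMono t)
    (h0 : t ⟨0, lt_of_lt_of_le two_pos hn⟩ = 0) (h1 : t ⟨n - 1, Nat.sub_lt (lt_of_lt_of_le two_pos hn) one_pos⟩ = 1) (s : I) :
    ∃ i : Fin (n - 1), t (A i) ≤ (s:ℝ) ∧ (s:ℝ) ≤ t (B i) := by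
  classical
  set Q := Finset.univ.filter (fun j : Fin n => t j ≤ (s:ℝ)) with hQ
  have hne : Q.Nonempty := ⟨⟨0, lt_of_lt_of_le two_pos hn⟩, by
    simp only [hQ, Finset.mem_filter, Finset.mem_univ, true_and]
    rw [h0]; exact s.2.1⟩
  set j := Q.max' hne with hj
  have hjle : t j ≤ (s:ℝ) := (Finset.mem_filter.1 (Q.max'_mem hne)).2
  by_cases hcase : (j : ℕ) < n - 1
  · refine ⟨⟨j, hcase⟩, ?_, ?_⟩
    · have hA : A (⟨j, hcase⟩ : Fin (n-1)) = j := Fin.ext rfl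
      rw [hA]; exact hjle
    · by_contra hlt
      push_neg at hlt
      have hmem2 : (B (⟨j, hcase⟩ : Fin (n-1))) ∈ Q := by
        simp only [hQ, Finset.mem_filter, Finset.mem_univ, true_and]
        exact hlt.le
      have hle := Q.le_max' _ hmem2
      rw [← hj] at hle
      have : (j:ℕ) + 1 ≤ (j:ℕ) := hle
      omega
  · have hj1 : (j:ℕ) = n - 1 := by have := j.isLt; omega
    have hjeq : j = ⟨n-1, Nat.sub_lt (lt_of_lt_of_le two_pos hn) one_pos⟩ := Fin.ext hj1
    have hs1 : (s:ℝ) = 1 := le_antisymm s.2.2 (by rw [hjeq, h1] at hjle; exact hjle)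
    refine ⟨⟨n-2, by omega⟩, ?_, ?_⟩
    · have : t (A (⟨n-2, by omega⟩ : Fin (n-1))) ≤ t ⟨n-1, Nat.sub_lt (lt_of_lt_of_le two_pos hn) one_pos⟩ := by
        apply ht.monotone
        simp only [A, Fin.le_def, Fin.coe_castLE]
        omega
      rw [h1] at this; rw [hs1]; exact this
    · have hB : B (⟨n-2, by omega⟩ : Fin (n-1)) = ⟨n-1, Nat.sub_lt (lt_of_lt_of_le two_pos hn) one_pos⟩ := Fin.ext (by
        simp only [B]; omega)
      rw [hB, h1, hs1]

variable {t} in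
lemma consist (ht : StrictMono t) (γ : InterpPaths p) (r : ℝ) (i j : Fin (n - 1))
    (hi1 : t (A i) ≤ r) (hi2 : r ≤ t (B i)) (hj1 : t (A j) ≤ r) (hj2 : r ≤ t (B j)) :
    γ i (rho t i r) = γ j (rho t j r) := by
  have main : ∀ (i j : Fin (n - 1)), i < j → t (A i) ≤ r → r ≤ t (B i) →
      t (A j) ≤ r → r ≤ t (B j) → γ i (rho t i r) = γ j (rho t j r) := by
    intro i j hij h1 h2 h3 h4
    have hBA : B i ≤ A j := by
      simp only [B, A, Fin.le_def, Fin.coe_castLE]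
      exact hij
    have hle : t (B i) ≤ t (A j) := ht.monotone hBA
    have e1 : r = t (B i) := le_antisymm h2 (by linarith)
    have e2 : r = t (A j) := le_antisymm (by linarith) h3
    have eBA : B i = A j := ht.injective (by rw [← e1, ← e2])
    rw [e1, rho_right t ht i, show t (B i) = t (A j) from congrArg t eBA, rho_left t j]
    rw [(γ i).target, (γ j).source, eBA]
  rcases lt_trichotomy i j with h | h | h
  · exact main i j h hi1 hi2 hj1 hj2
  · subst h; rfl
  · exact (main j i h hj1 hj2 hi1 hi2).symm

noncomputable def idx (hn : 2 ≤ n) (ht : StrictMono t)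
    (h0 : t ⟨0, lt_of_lt_of_le two_pos hn⟩ = 0) (h1 : t ⟨n - 1, Nat.sub_lt (lt_of_lt_of_le two_pos hn) one_pos⟩ = 1) (s : I) : Fin (n - 1) :=
  (exists_interval t hn ht h0 h1 s).choose

lemma idx_spec (hn : 2 ≤ n) (ht : StrictMono t)
    (h0 : t ⟨0, lt_of_lt_of_le two_pos hn⟩ = 0) (h1 : t ⟨n - 1, Nat.sub_lt (lt_of_lt_of_le two_pos hn) one_pos⟩ = 1) (s : I) :
    t (A (idx t hn ht h0 h1 s)) ≤ (s:ℝ) ∧ (s:ℝ) ≤ t (B (idx t hn ht h0 h1 s)) :=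
  (exists_interval t hn ht h0 h1 s).choose_spec

/-- The gluing of a tuple of paths into a single curve, as a raw function. -/
noncomputable def Fraw (hn : 2 ≤ n) (ht : StrictMono t)
    (h0 : t ⟨0, lt_of_lt_of_le two_pos hn⟩ = 0) (h1 : t ⟨n - 1, Nat.sub_lt (lt_of_lt_of_le two_pos hn) one_pos⟩ = 1)
    (q : InterpPaths p × I) : X :=
  q.1 (idx t hn ht h0 h1 q.2) (rho t (idx t hn ht h0 h1 q.2) (q.2 : ℝ))

lemma Fraw_eq (hn : 2 ≤ n) (ht : StrictMono t)
    (h0 : t ⟨0, lt_of_lt_of_le two_pos hn⟩ = 0) (h1 : t ⟨n - 1, Nat.sub_lt (lt_of_lt_of_le two_pos hn) one_pos⟩ = 1)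
    (γ : InterpPaths p) (s : I) (i : Fin (n - 1))
    (hi1 : t (A i) ≤ (s:ℝ)) (hi2 : (s:ℝ) ≤ t (B i)) :
    Fraw t p hn ht h0 h1 (γ, s) = γ i (rho t i s) :=
  consist p ht γ s _ i (idx_spec t hn ht h0 h1 s).1 (idx_spec t hn ht h0 h1 s).2 hi1 hi2

lemma Fraw_cont (hn : 2 ≤ n) (ht : StrictMono t)
    (h0 : t ⟨0, lt_of_lt_of_le two_pos hn⟩ = 0) (h1 : t ⟨n - 1, Nat.sub_lt (lt_of_lt_of_le two_pos hn) one_pos⟩ = 1) :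
    Continuous (Fraw t p hn ht h0 h1) := by
  apply (locallyFinite_of_finite fun i : Fin (n - 1) =>
      {q : InterpPaths p × I | t (A i) ≤ (q.2:ℝ) ∧ (q.2:ℝ) ≤ t (B i)}).continuous
  · rw [Set.eq_univ_iff_forall]
    intro q
    obtain ⟨i, hi⟩ := exists_interval t hn ht h0 h1 q.2
    exact Set.mem_iUnion.2 ⟨i, hi⟩
  · intro i
    exact (isClosed_le continuous_const (continuous_subtype_val.comp continuous_snd)).inter
      (isClosed_le (continuous_subtype_val.comp continuous_snd) continuous_const)
  · intro i
    have hg : Continuous fun q : InterpPaths p × I => q.1 i (rho t i (q.2:ℝ)) :=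
      ((continuous_apply i).comp continuous_fst).eval
        ((rho_cont t i).comp (continuous_subtype_val.comp continuous_snd))
    exact hg.continuousOn.congr fun q hq => Fraw_eq t p hn ht h0 h1 q.1 q.2 i hq.1 hq.2

/-- Restriction of an interpolating curve to a subinterval, as a path. -/
noncomputable def fwdPath (ht : StrictMono t) (hmem : ∀ i, t i ∈ unitInterval)
    (x : {x : C(I, X) // ∀ i : Fin n, x ⟨t i, hmem i⟩ = p i}) (i : Fin (n - 1)) :
    Path (p (A i)) (p (B i)) where
  toContinuousMap := x.1.comp (sigma t ht hmem i)
  source' := by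
    show x.1 (sigma t ht hmem i 0) = p (A i)
    rw [show sigma t ht hmem i 0 = ⟨t (A i), hmem (A i)⟩ from Subtype.ext (by simp [sigma])]
    exact x.2 (A i)
  target' := by
    show x.1 (sigma t ht hmem i 1) = p (B i)
    rw [show sigma t ht hmem i 1 = ⟨t (B i), hmem (B i)⟩ from
      Subtype.ext (by simp [sigma, add_sub_cancel])]
    exact x.2 (B i)

end Interp

end Cor56

set_option maxHeartbeats 2000000 in
open Cor56 in
/-- Corollary 5.6: in a path-connected space, the space of continuous curves
interpolating `n` prescribed points has the homotopy type of the `(n-1)`-fold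
cartesian power of the based loop space at `p₀`. -/
theorem stmt12 {X : Type*} [TopologicalSpace X] [PathConnectedSpace X]
    (n : ℕ) (hn : 2 ≤ n)
    (t : Fin n → ℝ) (ht : StrictMono t)
    (h0 : t ⟨0, by omega⟩ = 0) (h1 : t ⟨n - 1, by omega⟩ = 1)
    (hmem : ∀ i, t i ∈ unitInterval) (p : Fin n → X) :
    Nonempty
      (ContinuousMap.HomotopyEquiv
        {x : C(unitInterval, X) // ∀ i : Fin n, x ⟨t i, hmem i⟩ = p i}
        (Fin (n - 1) → Path (p ⟨0, by omega⟩) (p ⟨0, by omega⟩))) := by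
  classical
  let S := {x : C(I, X) // ∀ i : Fin n, x ⟨t i, hmem i⟩ = p i}
  let fwd : S → InterpPaths p := fun x i => fwdPath t p ht hmem x i
  have hfwd : Continuous fwd := by
    apply continuous_pi
    intro i
    apply continuous_induced_rng.2
    exact (ContinuousMap.continuous_precomp (sigma t ht hmem i)).comp continuous_subtype_val
  let G : C(InterpPaths p, C(I, X)) :=
    ContinuousMap.curry ⟨Fraw t p hn ht h0 h1, Fraw_cont t p hn ht h0 h1⟩
  have hGapp : ∀ (γ : InterpPaths p) (s : I), G γ s = Fraw t p hn ht h0 h1 (γ, s) :=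
    fun _ _ => rfl
  have hmemG : ∀ (γ : InterpPaths p) (j : Fin n), G γ ⟨t j, hmem j⟩ = p j := by
    intro γ j
    by_cases hj : (j : ℕ) < n - 1
    · have hA : A (⟨j, hj⟩ : Fin (n - 1)) = j := Fin.ext rfl
      have htj : t (A ⟨j, hj⟩) = t j := congrArg t hA
      rw [hGapp, Fraw_eq t p hn ht h0 h1 γ _ ⟨j, hj⟩ (le_of_eq htj)
        (htj.symm.trans_le (t_A_lt_B t ht _).le)]
      show γ ⟨j, hj⟩ (rho t ⟨j, hj⟩ (t j)) = p j
      rw [show t j = t (A ⟨j, hj⟩) from htj.symm, rho_left t, (γ ⟨j, hj⟩).source, hA]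
    · have hj' : (j : ℕ) = n - 1 := by have := j.isLt; omega
      have hB : B (⟨n - 2, by omega⟩ : Fin (n - 1)) = j := Fin.ext (by
        simp only [B]; omega)
      have htj : t (B (⟨n - 2, by omega⟩ : Fin (n - 1))) = t j := congrArg t hB
      rw [hGapp, Fraw_eq t p hn ht h0 h1 γ _ ⟨n - 2, by omega⟩
        ((t_A_lt_B t ht _).le.trans htj.le) (le_of_eq htj.symm)]
      show γ (⟨n - 2, by omega⟩ : Fin (n - 1)) (rho t ⟨n - 2, by omega⟩ (t j)) = p j
      rw [show t j = t (B (⟨n - 2, by omega⟩ : Fin (n - 1))) from htj.symm, rho_right t ht,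
        (γ (⟨n - 2, by omega⟩ : Fin (n - 1))).target, hB]
  let bwd : InterpPaths p → S := fun γ => ⟨G γ, hmemG γ⟩
  have hbwd : Continuous bwd := G.continuous.subtype_mk _
  have linv : ∀ x, bwd (fwd x) = x := by
    intro x
    apply Subtype.ext
    apply ContinuousMap.ext
    intro s
    obtain ⟨i, hi1, hi2⟩ := exists_interval t hn ht h0 h1 s
    show Fraw t p hn ht h0 h1 (fwd x, s) = x.1 s
    rw [Fraw_eq t p hn ht h0 h1 (fwd x) s i hi1 hi2]
    show x.1 (sigma t ht hmem i (rho t i (s:ℝ))) = x.1 s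
    congr 1
    exact Subtype.ext (affine_rho t ht i s hi1 hi2)
  have rinv : ∀ γ, fwd (bwd γ) = γ := by
    intro γ
    funext i
    ext s
    have hd := (t_A_lt_B t ht i).le
    have hs1 : t (A i) ≤ t (A i) + (s:ℝ) * (t (B i) - t (A i)) := by nlinarith [s.2.1]
    have hs2 : t (A i) + (s:ℝ) * (t (B i) - t (A i)) ≤ t (B i) := by nlinarith [s.2.2]
    show Fraw t p hn ht h0 h1 (γ, sigma t ht hmem i s) = γ i s
    rw [Fraw_eq t p hn ht h0 h1 γ _ i hs1 hs2]
    exact congrArg (γ i) (rho_affine t ht i s)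
  exact ⟨(Homeomorph.toHomotopyEquiv ⟨⟨fwd, bwd, linv, rinv⟩, hfwd, hbwd⟩).trans
    (ContinuousMap.HomotopyEquiv.piCongrRight fun i =>
      pathHE (p (A i)) (p (B i)) (p ⟨0, by omega⟩) (p ⟨0, by omega⟩))⟩
end
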